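/- For 1 <= s <= t and 0 <= g <= s, the R^g-vertex-connectivity of LeTQ(s,t) equals 2^g(s-g+1). -/

import Mathlib

/-- Flip bit `k` of the binary string `x`. -/
def bflip {n : ℕ} (x : Fin n → Bool) (k : Fin n) : Fin n → Bool :=
  Function.update x k (!(x k))

/-- Locally twisted cube adjacency on `n`-bit binary strings:
either flip bit `k` for some `k ≤ 1`; or, for some `k ≥ 2`, flip bits `k` and `k-1`
when bit 0 is `1`, resp. flip only bit `k` when bit 0 is `0`. -/
def cubeAdj (n : ℕ) (x y : Fin n → Bool) : Prop :=
  (∃ k : Fin n, (k : ℕ) ≤ 1 ∧ y = bflip x k) ∨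
  (∃ k : Fin n, 2 ≤ (k : ℕ) ∧
    ((∃ h0 : 0 < n, x ⟨0, h0⟩ = true ∧
        y = bflip (bflip x k) ⟨(k : ℕ) - 1, lt_of_le_of_lt (Nat.sub_le _ _) k.isLt⟩) ∨
     (∃ h0 : 0 < n, x ⟨0, h0⟩ = false ∧ y = bflip x k)))

/-- The locally twisted cube `LTQ_n`. -/
def LTQ (n : ℕ) : SimpleGraph (Fin n → Bool) where
  Adj x y := x ≠ y ∧ (cubeAdj n x y ∨ cubeAdj n y x)
  symm := ⟨fun _ _ h => ⟨h.1.symm, h.2.symm⟩⟩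
  loopless := ⟨fun _ h => h.1 rfl⟩

/-- A vertex of `LeTQ(s,t)`: the `a`-bits, the `b`-bits and the bit `c`. -/
abbrev LeTQVert (s t : ℕ) := (Fin s → Bool) × (Fin t → Bool) × Bool

/-- One-sided adjacency condition of the locally exchanged twisted cube. -/
def LeTQAdjOne (s t : ℕ) (u v : LeTQVert s t) : Prop :=
  (u.1 = v.1 ∧ u.2.1 = v.2.1 ∧ u.2.2 = !v.2.2) ∨
  (u.2.2 = true ∧ v.2.2 = true ∧ u.1 = v.1 ∧ cubeAdj t u.2.1 v.2.1) ∨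
  (u.2.2 = false ∧ v.2.2 = false ∧ u.2.1 = v.2.1 ∧ cubeAdj s u.1 v.1)

/-- The locally exchanged twisted cube `LeTQ(s,t)`. -/
def LeTQ (s t : ℕ) : SimpleGraph (LeTQVert s t) where
  Adj u v := u ≠ v ∧ (LeTQAdjOne s t u v ∨ LeTQAdjOne s t v u)
  symm := ⟨fun _ _ h => ⟨h.1.symm, h.2.symm⟩⟩
  loopless := ⟨fun _ h => h.1 rfl⟩

namespace Scratch

lemma bflip_apply {n : ℕ} (x : Fin n → Bool) (k j : Fin n) :
    bflip x k j = if j = k then !(x k) else x j := by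
  simp [bflip, Function.update_apply]

def mv {n : ℕ} (x : Fin n → Bool) (k : Fin n) : Fin n → Bool :=
  if (k : ℕ) ≤ 1 ∨ x ⟨0, k.pos⟩ = false then bflip x k
  else bflip (bflip x k) ⟨(k : ℕ) - 1, lt_of_le_of_lt (Nat.sub_le _ _) k.isLt⟩

lemma mv_apply {n : ℕ} (x : Fin n → Bool) (k j : Fin n) :
    mv x k j =
      if j = k ∨ (2 ≤ (k : ℕ) ∧ x ⟨0, k.pos⟩ = true ∧ (j : ℕ) = (k : ℕ) - 1) then !(x j)
      else x j := by
  unfold mv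
  by_cases h1 : (k : ℕ) ≤ 1
  · rw [if_pos (Or.inl h1), bflip_apply]
    by_cases hj : j = k
    · subst hj; simp
    · rw [if_neg hj, if_neg]
      rintro (h | ⟨h2, -, -⟩)
      · exact hj h
      · omega
  · by_cases h0 : x ⟨0, k.pos⟩ = false
    · rw [if_pos (Or.inr h0), bflip_apply]
      by_cases hj : j = k
      · subst hj; simp
      · rw [if_neg hj, if_neg]
        rintro (h | ⟨-, h3, -⟩)
        · exact hj h
        · rw [h0] at h3; cases h3
    · have h0' : x ⟨0, k.pos⟩ = true := by
        cases hx : x ⟨0, k.pos⟩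
        · exact absurd hx h0
        · rfl
      rw [if_neg (by push_neg; exact ⟨by omega, by rw [h0']; simp⟩)]
      rw [bflip_apply, bflip_apply, bflip_apply]
      have hkm : (⟨(k : ℕ) - 1, lt_of_le_of_lt (Nat.sub_le _ _) k.isLt⟩ : Fin n) ≠ k := by
        intro h; have := congrArg Fin.val h; simp at this; omega
      by_cases hj : j = (⟨(k : ℕ) - 1, lt_of_le_of_lt (Nat.sub_le _ _) k.isLt⟩ : Fin n)
      · rw [if_pos hj, if_neg hkm, if_pos]
        · rw [hj]
        · right
          refine ⟨by omega, h0', ?_⟩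
          rw [hj]
      · rw [if_neg hj]
        by_cases hjk : j = k
        · rw [if_pos hjk, if_pos (Or.inl hjk), hjk]
        · rw [if_neg hjk, if_neg]
          rintro (h | ⟨-, -, h3⟩)
          · exact hjk h
          · exact hj (Fin.ext h3)

lemma mv_self {n : ℕ} (x : Fin n → Bool) (k : Fin n) : mv x k k = !(x k) := by
  rw [mv_apply, if_pos (Or.inl rfl)]

lemma mv_apply_of_lt {n : ℕ} (x : Fin n → Bool) {k j : Fin n} (h : (k : ℕ) < (j : ℕ)) :
    mv x k j = x j := by
  rw [mv_apply, if_neg]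
  rintro (h' | ⟨-, -, h3⟩)
  · rw [h'] at h; omega
  · omega

lemma mv_apply_zero {n : ℕ} (x : Fin n → Bool) (k : Fin n) (hk : 1 ≤ (k : ℕ)) (h0 : 0 < n) :
    mv x k ⟨0, h0⟩ = x ⟨0, h0⟩ := by
  rw [mv_apply, if_neg]
  rintro (h | ⟨h2, -, h3⟩)
  · have := congrArg Fin.val h; simp at this; omega
  · simp at h3; omega

lemma mv_mv {n : ℕ} (x : Fin n → Bool) (k : Fin n) : mv (mv x k) k = x := by
  funext j
  rw [mv_apply (mv x k) k j]
  have hC : (j = k ∨ (2 ≤ (k : ℕ) ∧ (mv x k) ⟨0, k.pos⟩ = true ∧ (j : ℕ) = (k : ℕ) - 1)) ↔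
      (j = k ∨ (2 ≤ (k : ℕ) ∧ x ⟨0, k.pos⟩ = true ∧ (j : ℕ) = (k : ℕ) - 1)) := by
    constructor
    · rintro (h | ⟨h2, h3, h4⟩)
      · exact Or.inl h
      · rw [mv_apply_zero x k (by omega) k.pos] at h3
        exact Or.inr ⟨h2, h3, h4⟩
    · rintro (h | ⟨h2, h3, h4⟩)
      · exact Or.inl h
      · rw [← mv_apply_zero x k (by omega) k.pos] at h3
        exact Or.inr ⟨h2, h3, h4⟩
  rw [if_congr hC rfl rfl, mv_apply x k j]
  split_ifs with h
  · simp
  · rfl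

lemma mv_ne {n : ℕ} (x : Fin n → Bool) (k : Fin n) : mv x k ≠ x := by
  intro h
  have := congrFun h k
  rw [mv_self] at this
  simp at this

lemma mv_ne_mv {n : ℕ} (x : Fin n → Bool) {k k' : Fin n} (h : k ≠ k') :
    mv x k ≠ mv x k' := by
  have aux : ∀ k k' : Fin n, (k : ℕ) < (k' : ℕ) → mv x k ≠ mv x k' := by
    intro k k' hlt he
    have := congrFun he k'
    rw [mv_apply_of_lt x hlt, mv_self] at this
    simp at this
  rcases Nat.lt_trichotomy (k : ℕ) (k' : ℕ) with hlt | heq | hgt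
  · exact aux _ _ hlt
  · exact absurd (Fin.ext heq) h
  · exact fun he => aux _ _ hgt he.symm

lemma mv_inj_k {n : ℕ} (x : Fin n → Bool) {k k' : Fin n} (h : mv x k = mv x k') : k = k' := by
  by_contra hne
  exact mv_ne_mv x hne h

lemma cubeAdj_mv {n : ℕ} (x : Fin n → Bool) (k : Fin n) : cubeAdj n x (mv x k) := by
  by_cases h1 : (k : ℕ) ≤ 1
  · exact Or.inl ⟨k, h1, by unfold mv; rw [if_pos (Or.inl h1)]⟩
  · refine Or.inr ⟨k, by omega, ?_⟩
    by_cases h0 : x ⟨0, k.pos⟩ = false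
    · exact Or.inr ⟨k.pos, h0, by unfold mv; rw [if_pos (Or.inr h0)]⟩
    · have h0' : x ⟨0, k.pos⟩ = true := by
        cases hx : x ⟨0, k.pos⟩
        · exact absurd hx h0
        · rfl
      exact Or.inl ⟨k.pos, h0', by
        unfold mv; rw [if_neg (by push_neg; exact ⟨by omega, by rw [h0']; simp⟩)]⟩

lemma cubeAdj_iff {n : ℕ} (x y : Fin n → Bool) : cubeAdj n x y ↔ ∃ k, y = mv x k := by
  constructor
  · rintro (⟨k, hk, rfl⟩ | ⟨k, hk, (⟨h0, hx, rfl⟩ | ⟨h0, hx, rfl⟩)⟩)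
    · exact ⟨k, by unfold mv; rw [if_pos (Or.inl hk)]⟩
    · exact ⟨k, by
        unfold mv
        rw [if_neg (by push_neg; exact ⟨by omega, by rw [show x ⟨0, k.pos⟩ = true from hx]; simp⟩)]⟩
    · exact ⟨k, by unfold mv; rw [if_pos (Or.inr hx)]⟩
  · rintro ⟨k, rfl⟩
    exact cubeAdj_mv x k

lemma cubeAdj_symm_iff {n : ℕ} (x y : Fin n → Bool) :
    (cubeAdj n x y ∨ cubeAdj n y x) ↔ ∃ k, y = mv x k := by
  constructor
  · rintro (h | h)
    · exact (cubeAdj_iff x y).1 h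
    · obtain ⟨k, hk⟩ := (cubeAdj_iff y x).1 h
      subst hk
      exact ⟨k, (mv_mv y k).symm⟩
  · rintro ⟨k, rfl⟩
    exact Or.inl (cubeAdj_mv x k)

end Scratch

namespace Scratch2
open Scratch

lemma adj_iff {s t : ℕ} {u v : LeTQVert s t} : (LeTQ s t).Adj u v ↔
    (u.1 = v.1 ∧ u.2.1 = v.2.1 ∧ v.2.2 = !u.2.2) ∨
    (u.2.2 = true ∧ v.2.2 = true ∧ u.1 = v.1 ∧ ∃ k, v.2.1 = mv u.2.1 k) ∨
    (u.2.2 = false ∧ v.2.2 = false ∧ u.2.1 = v.2.1 ∧ ∃ k, v.1 = mv u.1 k) := by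
  constructor
  · rintro ⟨hne, h | h⟩ <;>
      rcases h with ⟨h1, h2, h3⟩ | ⟨h1, h2, h3, h4⟩ | ⟨h1, h2, h3, h4⟩
    · exact Or.inl ⟨h1, h2, by rw [h3]; simp⟩
    · exact Or.inr (Or.inl ⟨h1, h2, h3, (cubeAdj_symm_iff _ _).1 (Or.inl h4)⟩)
    · exact Or.inr (Or.inr ⟨h1, h2, h3, (cubeAdj_symm_iff _ _).1 (Or.inl h4)⟩)
    · exact Or.inl ⟨h1.symm, h2.symm, h3⟩
    · exact Or.inr (Or.inl ⟨h2, h1, h3.symm, (cubeAdj_symm_iff _ _).1 (Or.inr h4)⟩)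
    · exact Or.inr (Or.inr ⟨h2, h1, h3.symm, (cubeAdj_symm_iff _ _).1 (Or.inr h4)⟩)
  · rintro (⟨h1, h2, h3⟩ | ⟨h1, h2, h3, k, h4⟩ | ⟨h1, h2, h3, k, h4⟩)
    · refine ⟨?_, Or.inl (Or.inl ⟨h1, h2, by rw [h3]; simp⟩)⟩
      intro he; rw [he] at h3; simp at h3
    · refine ⟨?_, Or.inl (Or.inr (Or.inl ⟨h1, h2, h3, (cubeAdj_iff _ _).2 ⟨k, h4⟩⟩))⟩
      intro he; rw [he] at h4; exact mv_ne _ _ h4.symm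
    · refine ⟨?_, Or.inl (Or.inr (Or.inr ⟨h1, h2, h3, (cubeAdj_iff _ _).2 ⟨k, h4⟩⟩))⟩
      intro he; rw [he] at h4; exact mv_ne _ _ h4.symm

def zz (t : ℕ) : Fin t → Bool := fun _ => false

def Sgset (s g : ℕ) : Set (Fin s → Bool) := {a | ∀ j : Fin s, g ≤ (j : ℕ) → a j = false}

def Xgset (s g : ℕ) : Set (Fin s → Bool) := {x | ∃ k : Fin s, g ≤ (k : ℕ) ∧ mv x k ∈ Sgset s g}

def AAset (s t g : ℕ) : Set (LeTQVert s t) :=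
  {v | v.2.2 = false ∧ v.2.1 = zz t ∧ v.1 ∈ Sgset s g}

def FFset (s t g : ℕ) : Set (LeTQVert s t) :=
  {v | (v.2.2 = true ∧ v.2.1 = zz t ∧ v.1 ∈ Sgset s g) ∨
       (v.2.2 = false ∧ v.2.1 = zz t ∧ v.1 ∈ Xgset s g)}

lemma Sg_Xg_disjoint {s g : ℕ} {x : Fin s → Bool} (hx : x ∈ Sgset s g) : x ∉ Xgset s g := by
  rintro ⟨k, hk, hmem⟩
  have h1 := hmem k hk
  rw [mv_self, hx k hk] at h1
  cases h1

lemma mv_mem_Sg {s g : ℕ} {a : Fin s → Bool} (ha : a ∈ Sgset s g) {k : Fin s}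
    (hk : (k : ℕ) < g) : mv a k ∈ Sgset s g := by
  intro j hj
  rw [mv_apply_of_lt a (by omega)]
  exact ha j hj

lemma mem_SX_congr {s g : ℕ} {x y : Fin s → Bool}
    (hxy : ∀ j : Fin s, g ≤ (j : ℕ) → x j = y j)
    (h0 : ∀ h : 0 < s, x ⟨0, h⟩ = y ⟨0, h⟩) :
    (x ∈ Sgset s g ↔ y ∈ Sgset s g) ∧ (x ∈ Xgset s g ↔ y ∈ Xgset s g) := by
  have hmv : ∀ (k : Fin s), ∀ j : Fin s, g ≤ (j : ℕ) → mv x k j = mv y k j := by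
    intro k j hj
    rw [mv_apply x k j, mv_apply y k j, h0 k.pos, hxy j hj]
  constructor
  · constructor
    · intro h j hj; rw [← hxy j hj]; exact h j hj
    · intro h j hj; rw [hxy j hj]; exact h j hj
  · constructor
    · rintro ⟨k, hk, hm⟩
      exact ⟨k, hk, fun j hj => by rw [← hmv k j hj]; exact hm j hj⟩
    · rintro ⟨k, hk, hm⟩
      exact ⟨k, hk, fun j hj => by rw [hmv k j hj]; exact hm j hj⟩

end Scratch2

namespace Scratch3
open Scratch Scratch2

def ee (s g : ℕ) (b : Fin g → Bool) : Fin s → Bool :=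
  fun j => if h : (j : ℕ) < g then b ⟨(j : ℕ), h⟩ else false

lemma ee_mem_Sg {s g : ℕ} (b : Fin g → Bool) : ee s g b ∈ Sgset s g := by
  intro j hj
  exact dif_neg (by omega)

lemma ee_inj {s g : ℕ} (hg : g ≤ s) : Function.Injective (ee s g) := by
  intro b b' h
  funext i
  have := congrFun h ⟨(i : ℕ), lt_of_lt_of_le i.isLt hg⟩
  simpa [ee, i.isLt] using this

lemma Sg_eq_range {s g : ℕ} (hg : g ≤ s) : Sgset s g = Set.range (ee s g) := by
  ext a
  constructor
  · intro ha
    refine ⟨fun i => a ⟨(i : ℕ), lt_of_lt_of_le i.isLt hg⟩, ?_⟩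
    funext j
    by_cases hj : (j : ℕ) < g
    · simp only [ee, dif_pos hj]
    · rw [show ee s g _ j = false from dif_neg hj, ha j (by omega)]
  · rintro ⟨b, rfl⟩
    exact ee_mem_Sg b

def ffm (s g : ℕ) (p : (Fin g → Bool) × Fin (s - g)) : Fin s → Bool :=
  mv (ee s g p.1) ⟨g + (p.2 : ℕ), by have := p.2.isLt; omega⟩

lemma Xg_eq_range {s g : ℕ} (hg : g ≤ s) : Xgset s g = Set.range (ffm s g) := by
  ext x
  constructor
  · rintro ⟨k, hk, hm⟩
    rw [Sg_eq_range hg] at hm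
    obtain ⟨b, hb⟩ := hm
    refine ⟨(b, ⟨(k : ℕ) - g, by have := k.isLt; omega⟩), ?_⟩
    have hkk : (⟨g + ((k : ℕ) - g), by have := k.isLt; omega⟩ : Fin s) = k := by
      apply Fin.ext; simp; omega
    show mv (ee s g b) _ = x
    rw [hb]
    rw [show (⟨g + ((⟨(k : ℕ) - g, by have := k.isLt; omega⟩ : Fin (s - g)) : ℕ), _⟩ : Fin s) = k from hkk]
    exact mv_mv x k
  · rintro ⟨⟨b, i⟩, rfl⟩
    refine ⟨⟨g + (i : ℕ), by have := i.isLt; omega⟩, by simp, ?_⟩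
    show mv (mv (ee s g b) _) _ ∈ _
    rw [mv_mv]
    exact ee_mem_Sg b

lemma ffm_inj {s g : ℕ} (hg : g ≤ s) : Function.Injective (ffm s g) := by
  rintro ⟨b, i⟩ ⟨b', i'⟩ h
  unfold ffm at h
  simp only at h
  set k : Fin s := ⟨g + (i : ℕ), by have := i.isLt; omega⟩ with hk
  set k' : Fin s := ⟨g + (i' : ℕ), by have := i'.isLt; omega⟩ with hk'
  have haux : ∀ (c c' : Fin g → Bool) (m m' : Fin s), g ≤ (m : ℕ) → (m : ℕ) < (m' : ℕ) →
      mv (ee s g c) m ≠ mv (ee s g c') m' := by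
    intro c c' m m' hm hlt he
    have := congrFun he m'
    rw [mv_apply_of_lt _ hlt, mv_self] at this
    rw [show ee s g c m' = false from dif_neg (by omega),
        show ee s g c' m' = false from dif_neg (by omega)] at this
    cases this
  have hkk : (k : ℕ) = (k' : ℕ) := by
    rcases Nat.lt_trichotomy (k : ℕ) (k' : ℕ) with hlt | heq | hgt
    · exact absurd h (haux b b' k k' (by simp [hk]) hlt)
    · exact heq
    · exact absurd h.symm (haux b' b k' k (by simp [hk']) hgt)
  have hke : k = k' := Fin.ext hkk
  have hb : b = b' := by
    apply ee_inj hg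
    have := congrArg (fun z => mv z k) h
    rw [mv_mv, hke, mv_mv] at this
    exact this
  have hi : i = i' := by
    apply Fin.ext
    simp only [hk, hk'] at hkk
    omega
  rw [hb, hi]

lemma ncard_range {α β : Type*} [Fintype α] (f : α → β) (hf : Function.Injective f) :
    (Set.range f).ncard = Fintype.card α := by
  rw [← Set.image_univ, Set.ncard_image_of_injective _ hf, Set.ncard_univ,
    Nat.card_eq_fintype_card]

lemma FF_eq_union (s t g : ℕ) :
    FFset s t g = (fun a => ((a, zz t, true) : LeTQVert s t)) '' Sgset s g ∪
      (fun x => ((x, zz t, false) : LeTQVert s t)) '' Xgset s g := by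
  ext ⟨a, b, c⟩
  constructor
  · rintro (⟨h1, h2, h3⟩ | ⟨h1, h2, h3⟩)
    · left; exact ⟨a, h3, by simp only at h1 h2 ⊢; rw [h1, h2]⟩
    · right; exact ⟨a, h3, by simp only at h1 h2 ⊢; rw [h1, h2]⟩
  · rintro (⟨x, hx, he⟩ | ⟨x, hx, he⟩)
    · obtain ⟨rfl, rfl, rfl⟩ : x = a ∧ zz t = b ∧ true = c := by
        simpa [Prod.ext_iff] using he
      exact Or.inl ⟨rfl, rfl, hx⟩
    · obtain ⟨rfl, rfl, rfl⟩ : x = a ∧ zz t = b ∧ false = c := by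
        simpa [Prod.ext_iff] using he
      exact Or.inr ⟨rfl, rfl, hx⟩

lemma ncard_FF {s t g : ℕ} (hg : g ≤ s) : (FFset s t g).ncard = 2 ^ g * (s - g + 1) := by
  rw [FF_eq_union]
  have hinj1 : Function.Injective (fun a => ((a, zz t, true) : LeTQVert s t)) := by
    intro a a' h; exact (Prod.ext_iff.1 h).1
  have hinj2 : Function.Injective (fun x => ((x, zz t, false) : LeTQVert s t)) := by
    intro a a' h; exact (Prod.ext_iff.1 h).1
  have hdisj : Disjoint ((fun a => ((a, zz t, true) : LeTQVert s t)) '' Sgset s g)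
      ((fun x => ((x, zz t, false) : LeTQVert s t)) '' Xgset s g) := by
    rw [Set.disjoint_left]
    rintro v ⟨x, hx, rfl⟩ ⟨y, hy, hv⟩
    have := (Prod.ext_iff.1 (Prod.ext_iff.1 hv).2).2
    cases this
  rw [Set.ncard_union_eq hdisj (Set.toFinite _) (Set.toFinite _),
    Set.ncard_image_of_injective _ hinj1, Set.ncard_image_of_injective _ hinj2,
    Sg_eq_range hg, Xg_eq_range hg, ncard_range _ (ee_inj hg), ncard_range _ (ffm_inj hg)]
  simp only [Fintype.card_fun, Fintype.card_bool, Fintype.card_fin, Fintype.card_prod]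
  have h1 : s - g + 1 = (s - g) + 1 := rfl
  rw [h1, Nat.mul_add, Nat.mul_one, Nat.add_comm]

end Scratch3

namespace Scratch4
open Scratch Scratch2 Scratch3

lemma mk_inj {n i i' : ℕ} {hi : i < n} {hi' : i' < n}
    (h : (⟨i, hi⟩ : Fin n) = ⟨i', hi'⟩) : i = i' := by
  have := congrArg Fin.val h
  simpa using this

lemma le_ncard_of_inj {α : Type*} [Finite α] {S : Set α} {m : ℕ} (ψ : Fin m → α)
    (hinj : Function.Injective ψ) (hmem : ∀ i, ψ i ∈ S) : m ≤ S.ncard := by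
  have h1 : (Set.range ψ).ncard = m := by
    rw [← Set.image_univ, Set.ncard_image_of_injective _ hinj, Set.ncard_univ,
      Nat.card_eq_fintype_card, Fintype.card_fin]
  exact h1 ▸ Set.ncard_le_ncard (Set.range_subset_iff.2 hmem) (Set.toFinite S)

lemma deg_cond {s t g : ℕ} (hst : s ≤ t) (hg : g ≤ s) :
    ∀ v ∉ FFset s t g, g ≤ (((LeTQ s t).neighborSet v) \ FFset s t g).ncard := by
  rintro ⟨a, b, c⟩ hv
  have hgs : ∀ i : Fin g, (i : ℕ) < s := fun i => lt_of_lt_of_le i.isLt hg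
  have hgt : ∀ i : Fin g, (i : ℕ) < t := fun i => lt_of_lt_of_le i.isLt (hg.trans hst)
  cases c with
  | false =>
    by_cases hb : b = zz t
    · subst hb
      by_cases ha : a ∈ Sgset s g
      · -- case 2 : v ∈ A
        apply le_ncard_of_inj (fun i : Fin g => ((mv a ⟨(i : ℕ), hgs i⟩, zz t, false) : LeTQVert s t))
        · intro i i' h
          have h1 : mv a ⟨(i : ℕ), hgs i⟩ = mv a ⟨(i' : ℕ), hgs i'⟩ := (Prod.ext_iff.1 h).1
          exact Fin.ext (mk_inj (mv_inj_k a h1))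
        · intro i
          refine ⟨adj_iff.2 (Or.inr (Or.inr ⟨rfl, rfl, rfl, ⟨(i : ℕ), hgs i⟩, rfl⟩)), ?_⟩
          rintro (⟨h1, -, -⟩ | ⟨-, -, h3⟩)
          · cases h1
          · exact Sg_Xg_disjoint (mv_mem_Sg ha i.isLt) h3
      · -- case 3
        have haX : a ∉ Xgset s g := fun hX => hv (Or.inr ⟨rfl, rfl, hX⟩)
        apply le_ncard_of_inj (fun i : Fin g =>
          if (i : ℕ) = 0 then ((a, zz t, true) : LeTQVert s t)
          else (mv a ⟨(i : ℕ), hgs i⟩, zz t, false))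
        · intro i i' h
          beta_reduce at h
          by_cases hi : (i : ℕ) = 0 <;> by_cases hi' : (i' : ℕ) = 0
          · exact Fin.ext (hi.trans hi'.symm)
          · rw [if_pos hi, if_neg hi'] at h
            exact absurd (Prod.ext_iff.1 (Prod.ext_iff.1 h).2).2 (by simp)
          · rw [if_neg hi, if_pos hi'] at h
            exact absurd (Prod.ext_iff.1 (Prod.ext_iff.1 h).2).2 (by simp)
          · rw [if_neg hi, if_neg hi'] at h
            have h1 : mv a ⟨(i : ℕ), hgs i⟩ = mv a ⟨(i' : ℕ), hgs i'⟩ := (Prod.ext_iff.1 h).1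
            exact Fin.ext (mk_inj (mv_inj_k a h1))
        · intro i
          by_cases hi : (i : ℕ) = 0
          · rw [if_pos hi]
            refine ⟨adj_iff.2 (Or.inl ⟨rfl, rfl, rfl⟩), ?_⟩
            rintro (⟨-, -, h3⟩ | ⟨h1, -, -⟩)
            · exact ha h3
            · cases h1
          · rw [if_neg hi]
            refine ⟨adj_iff.2 (Or.inr (Or.inr ⟨rfl, rfl, rfl, ⟨(i : ℕ), hgs i⟩, rfl⟩)), ?_⟩
            have hcongr := mem_SX_congr
              (x := mv a ⟨(i : ℕ), hgs i⟩) (y := a)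
              (fun j hj => mv_apply_of_lt a (lt_of_lt_of_le i.isLt hj))
              (fun h => mv_apply_zero a _ (show 1 ≤ (i : ℕ) by omega) h)
            rintro (⟨h1, -, -⟩ | ⟨-, -, h3⟩)
            · cases h1
            · exact haX (hcongr.2.1 h3)
    · -- case 1 : b ≠ 0, c = 0
      apply le_ncard_of_inj (fun i : Fin g => ((mv a ⟨(i : ℕ), hgs i⟩, b, false) : LeTQVert s t))
      · intro i i' h
        have h1 : mv a ⟨(i : ℕ), hgs i⟩ = mv a ⟨(i' : ℕ), hgs i'⟩ := (Prod.ext_iff.1 h).1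
        exact Fin.ext (mk_inj (mv_inj_k a h1))
      · intro i
        refine ⟨adj_iff.2 (Or.inr (Or.inr ⟨rfl, rfl, rfl, ⟨(i : ℕ), hgs i⟩, rfl⟩)), ?_⟩
        rintro (⟨h1, -, -⟩ | ⟨-, h2, -⟩)
        · cases h1
        · exact hb h2
  | true =>
    by_cases ha : a ∈ Sgset s g
    · -- case 5 : a ∈ Sg, so b ≠ 0
      have hbz : b ≠ zz t := fun h => hv (Or.inl ⟨rfl, h, ha⟩)
      by_cases hex : ∃ i : Fin g, mv b ⟨(i : ℕ), hgt i⟩ = zz t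
      · obtain ⟨i₀, hi₀⟩ := hex
        apply le_ncard_of_inj (fun i : Fin g =>
          if i = i₀ then ((a, b, false) : LeTQVert s t)
          else (a, mv b ⟨(i : ℕ), hgt i⟩, true))
        · intro i i' h
          beta_reduce at h
          by_cases hi : i = i₀ <;> by_cases hi' : i' = i₀
          · rw [hi, hi']
          · rw [if_pos hi, if_neg hi'] at h
            exact absurd (Prod.ext_iff.1 (Prod.ext_iff.1 h).2).2 (by simp)
          · rw [if_neg hi, if_pos hi'] at h
            exact absurd (Prod.ext_iff.1 (Prod.ext_iff.1 h).2).2 (by simp)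
          · rw [if_neg hi, if_neg hi'] at h
            have h1 : mv b ⟨(i : ℕ), hgt i⟩ = mv b ⟨(i' : ℕ), hgt i'⟩ :=
              (Prod.ext_iff.1 (Prod.ext_iff.1 h).2).1
            exact Fin.ext (mk_inj (mv_inj_k b h1))
        · intro i
          by_cases hi : i = i₀
          · rw [if_pos hi]
            refine ⟨adj_iff.2 (Or.inl ⟨rfl, rfl, rfl⟩), ?_⟩
            rintro (⟨h1, -, -⟩ | ⟨-, h2, -⟩)
            · cases h1
            · exact hbz h2
          · rw [if_neg hi]
            refine ⟨adj_iff.2 (Or.inr (Or.inl ⟨rfl, rfl, rfl, ⟨(i : ℕ), hgt i⟩, rfl⟩)), ?_⟩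
            rintro (⟨-, h2, -⟩ | ⟨h1, -, -⟩)
            · apply hi
              have h2' : mv b ⟨(i : ℕ), hgt i⟩ = zz t := h2
              have e1 := mv_mv b ⟨(i : ℕ), hgt i⟩
              rw [h2'] at e1
              have e2 := mv_mv b ⟨(i₀ : ℕ), hgt i₀⟩
              rw [hi₀] at e2
              exact Fin.ext (mk_inj (mv_inj_k (zz t) (e1.trans e2.symm)))
            · cases h1
      · apply le_ncard_of_inj (fun i : Fin g => ((a, mv b ⟨(i : ℕ), hgt i⟩, true) : LeTQVert s t))
        · intro i i' h
          have h1 : mv b ⟨(i : ℕ), hgt i⟩ = mv b ⟨(i' : ℕ), hgt i'⟩ :=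
            (Prod.ext_iff.1 (Prod.ext_iff.1 h).2).1
          exact Fin.ext (mk_inj (mv_inj_k b h1))
        · intro i
          refine ⟨adj_iff.2 (Or.inr (Or.inl ⟨rfl, rfl, rfl, ⟨(i : ℕ), hgt i⟩, rfl⟩)), ?_⟩
          rintro (⟨-, h2, -⟩ | ⟨h1, -, -⟩)
          · exact hex ⟨i, h2⟩
          · cases h1
    · -- case 4 : a ∉ Sg, c = 1
      apply le_ncard_of_inj (fun i : Fin g => ((a, mv b ⟨(i : ℕ), hgt i⟩, true) : LeTQVert s t))
      · intro i i' h
        have h1 : mv b ⟨(i : ℕ), hgt i⟩ = mv b ⟨(i' : ℕ), hgt i'⟩ :=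
          (Prod.ext_iff.1 (Prod.ext_iff.1 h).2).1
        exact Fin.ext (mk_inj (mv_inj_k b h1))
      · intro i
        refine ⟨adj_iff.2 (Or.inr (Or.inl ⟨rfl, rfl, rfl, ⟨(i : ℕ), hgt i⟩, rfl⟩)), ?_⟩
        rintro (⟨-, -, h3⟩ | ⟨h1, -, -⟩)
        · exact ha h3
        · cases h1

lemma AA_closed {s t g : ℕ} {u v : LeTQVert s t} (hu : u ∈ AAset s t g)
    (h : (LeTQ s t).Adj u v) (hv : v ∉ FFset s t g) : v ∈ AAset s t g := by
  obtain ⟨hc, hb, ha⟩ := hu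
  rcases adj_iff.1 h with ⟨h1, h2, h3⟩ | ⟨h1, -, -⟩ | ⟨-, hv2, hb2, k, hk⟩
  · exfalso; apply hv; left
    exact ⟨by rw [h3, hc]; rfl, by rw [← h2]; exact hb, by rw [← h1]; exact ha⟩
  · rw [hc] at h1; cases h1
  · by_cases hkg : (k : ℕ) < g
    · exact ⟨hv2, by rw [← hb2]; exact hb, by rw [hk]; exact mv_mem_Sg ha hkg⟩
    · exfalso; apply hv; right
      exact ⟨hv2, by rw [← hb2]; exact hb, ⟨k, by omega, by rw [hk, mv_mv]; exact ha⟩⟩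

lemma not_preconn {s t g : ℕ} (hs : 1 ≤ s) (hst : s ≤ t) (hg : g ≤ s) :
    ¬ ((LeTQ s t).induce (FFset s t g)ᶜ).Preconnected := by
  have ht : 0 < t := by omega
  have hSg0 : (fun _ => false : Fin s → Bool) ∈ Sgset s g := fun j hj => rfl
  have hu₀ : ((fun _ => false, zz t, false) : LeTQVert s t) ∉ FFset s t g := by
    rintro (⟨h1, -, -⟩ | ⟨-, -, h3⟩)
    · cases h1
    · exact Sg_Xg_disjoint hSg0 h3
  have hw₀ : ((fun _ => false, fun _ => true, true) : LeTQVert s t) ∉ FFset s t g := by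
    rintro (⟨-, h2, -⟩ | ⟨h1, -, -⟩)
    · have := congrFun h2 ⟨0, ht⟩; cases this
    · cases h1
  intro hpre
  obtain ⟨p⟩ := hpre ⟨_, hu₀⟩ ⟨_, hw₀⟩
  have key : ∀ (z z' : ↥(FFset s t g)ᶜ) (q : ((LeTQ s t).induce (FFset s t g)ᶜ).Walk z z'),
      (z : LeTQVert s t) ∈ AAset s t g → (z' : LeTQVert s t) ∈ AAset s t g := by
    intro z z' q
    induction q with
    | nil => exact id
    | @cons zu y zw hadj q ih =>
      intro hz
      exact ih (AA_closed hz (by exact hadj) y.2)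
  have hw := key _ _ p ⟨rfl, rfl, hSg0⟩
  cases hw.1

end Scratch4

namespace Scratch5
open Scratch

def nbr (n : ℕ) (D : Set (Fin n → Bool)) (v : Fin n → Bool) : Set (Fin n → Bool) :=
  {y | y ∈ D ∧ ∃ k : Fin n, y = mv v k}

def cnb (n : ℕ) (D : Set (Fin n → Bool)) : Set (Fin n → Bool) :=
  {y | y ∈ D ∨ ∃ v ∈ D, ∃ k : Fin n, y = mv v k}

lemma subset_cnb (n : ℕ) (D : Set (Fin n → Bool)) : D ⊆ cnb n D := fun _ h => Or.inl h

def lowf {n : ℕ} (x : Fin (n+1) → Bool) : Fin n → Bool := fun j => x j.castSucc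

lemma ext_lowtop {n : ℕ} {x y : Fin (n+1) → Bool} (h1 : lowf x = lowf y)
    (h2 : x (Fin.last n) = y (Fin.last n)) : x = y := by
  funext j
  rcases Fin.eq_castSucc_or_eq_last j with ⟨j', rfl⟩ | rfl
  · exact congrFun h1 j'
  · exact h2

lemma mv_castSucc_top {n : ℕ} (x : Fin (n+1) → Bool) (k : Fin n) :
    mv x k.castSucc (Fin.last n) = x (Fin.last n) := by
  have hk := k.isLt
  rw [mv_apply, if_neg]
  rintro (h | ⟨-, -, h3⟩)
  · have := congrArg Fin.val h
    simp at this
    omega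
  · simp at h3
    omega

lemma mv_last_top {n : ℕ} (x : Fin (n+1) → Bool) :
    mv x (Fin.last n) (Fin.last n) = !(x (Fin.last n)) := mv_self x _

lemma mv_top_of_ne_last {n : ℕ} (x : Fin (n+1) → Bool) {k : Fin (n+1)} (hk : k ≠ Fin.last n) :
    mv x k (Fin.last n) = x (Fin.last n) := by
  apply mv_apply_of_lt
  have := Fin.val_lt_last hk
  simpa using this

lemma eq_castSucc_of_ne_last {n : ℕ} {k : Fin (n+1)} (hk : k ≠ Fin.last n) :
    ∃ k' : Fin n, k = k'.castSucc := ⟨⟨(k : ℕ), Fin.val_lt_last hk⟩, Fin.ext (by simp)⟩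

lemma lowf_mv {n : ℕ} (x : Fin (n+1) → Bool) (k : Fin n) :
    lowf (mv x k.castSucc) = mv (lowf x) k := by
  funext j
  show mv x k.castSucc j.castSucc = mv (lowf x) k j
  have e0 : x ⟨0, (k.castSucc).pos⟩ = lowf x ⟨0, k.pos⟩ := by
    show x _ = x _
    exact congrArg x (Fin.ext (by simp))
  rw [mv_apply x, mv_apply (lowf x)]
  simp only [Fin.coe_castSucc, Fin.castSucc_inj]
  rw [e0]
  split_ifs with hcond
  · rfl
  · rfl

lemma lowf_injOn {n : ℕ} {D : Set (Fin (n+1) → Bool)} {b : Bool}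
    (hD : ∀ x ∈ D, x (Fin.last n) = b) : Set.InjOn lowf D :=
  fun x hx y hy h => ext_lowtop h ((hD x hx).trans (hD y hy).symm)

lemma ncard_lowf_image {n : ℕ} {D : Set (Fin (n+1) → Bool)} {b : Bool}
    (hD : ∀ x ∈ D, x (Fin.last n) = b) : (lowf '' D).ncard = D.ncard :=
  Set.ncard_image_of_injOn (lowf_injOn hD)

lemma nbr_lowf {n : ℕ} {D : Set (Fin (n+1) → Bool)} {b : Bool}
    (hD : ∀ x ∈ D, x (Fin.last n) = b) {v : Fin (n+1) → Bool} (hv : v ∈ D) :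
    lowf '' (nbr (n+1) D v) = nbr n (lowf '' D) (lowf v) := by
  ext z
  constructor
  · rintro ⟨y, ⟨hyD, k, rfl⟩, rfl⟩
    have hk : k ≠ Fin.last n := by
      rintro rfl
      have h1 := hD _ hyD
      rw [mv_last_top, hD v hv] at h1
      simp at h1
    obtain ⟨k', rfl⟩ := eq_castSucc_of_ne_last hk
    exact ⟨⟨mv v k'.castSucc, hyD, rfl⟩, k', (lowf_mv v k')⟩
  · rintro ⟨⟨y, hyD, hy⟩, k, hk⟩
    refine ⟨mv v k.castSucc, ⟨?_, k.castSucc, rfl⟩, by rw [lowf_mv, ← hk]⟩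
    have hye : y = mv v k.castSucc := by
      apply ext_lowtop
      · rw [hy, hk, lowf_mv]
      · rw [mv_castSucc_top, hD v hv, hD y hyD]
    rw [← hye]; exact hyD

lemma cnb_lowf {n : ℕ} {D : Set (Fin (n+1) → Bool)} {b : Bool}
    (hD : ∀ x ∈ D, x (Fin.last n) = b) :
    lowf '' {y ∈ cnb (n+1) D | y (Fin.last n) = b} = cnb n (lowf '' D) := by
  ext z
  constructor
  · rintro ⟨y, ⟨hyc, hyb⟩, rfl⟩
    rcases hyc with hyD | ⟨v, hv, k, rfl⟩
    · exact Or.inl ⟨y, hyD, rfl⟩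
    · have hk : k ≠ Fin.last n := by
        rintro rfl
        rw [mv_last_top, hD v hv] at hyb
        simp at hyb
      obtain ⟨k', rfl⟩ := eq_castSucc_of_ne_last hk
      exact Or.inr ⟨lowf v, ⟨v, hv, rfl⟩, k', (lowf_mv v k')⟩
  · rintro (⟨y, hyD, rfl⟩ | ⟨w, ⟨v, hv, rfl⟩, k, rfl⟩)
    · exact ⟨y, ⟨Or.inl hyD, hD y hyD⟩, rfl⟩
    · refine ⟨mv v k.castSucc, ⟨Or.inr ⟨v, hv, k.castSucc, rfl⟩, ?_⟩, (lowf_mv v k).symm ▸ rfl⟩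
      rw [mv_castSucc_top, hD v hv]

lemma partner_injOn {n : ℕ} (D : Set (Fin (n+1) → Bool)) :
    Set.InjOn (fun v => mv v (Fin.last n)) D := by
  intro v hv w hw h
  have := congrArg (fun z => mv z (Fin.last n)) h
  simpa [mv_mv] using this

lemma nbr_ncard_le {n : ℕ} {D : Set (Fin (n+1) → Bool)} {b : Bool}
    (hD : ∀ x ∈ D, x (Fin.last n) = b) {v : Fin (n+1) → Bool} (hv : v (Fin.last n) = b) :
    (nbr (n+1) D v).ncard ≤ n := by
  have hsub : nbr (n+1) D v ⊆ (fun k : Fin n => mv v k.castSucc) '' Set.univ := by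
    rintro y ⟨hyD, k, rfl⟩
    have hk : k ≠ Fin.last n := by
      rintro rfl
      have h1 := hD _ hyD
      rw [mv_last_top, hv] at h1
      simp at h1
    obtain ⟨k', rfl⟩ := eq_castSucc_of_ne_last hk
    exact ⟨k', trivial, rfl⟩
  calc (nbr (n+1) D v).ncard ≤ ((fun k : Fin n => mv v k.castSucc) '' Set.univ).ncard :=
        Set.ncard_le_ncard hsub (Set.toFinite _)
    _ ≤ (Set.univ : Set (Fin n)).ncard := Set.ncard_image_le (Set.toFinite _)
    _ = n := by rw [Set.ncard_univ, Nat.card_eq_fintype_card, Fintype.card_fin]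

end Scratch5

namespace Scratch6
open Scratch Scratch5


lemma la_pow2 (g w : ℕ) (hg : 0 < g) : 2 ^ g * w = 2 * (2 ^ (g-1) * w) := by
  conv_lhs => rw [show g = (g-1)+1 from by omega, pow_succ]
  ring

lemma la2 (g : ℕ) (hg : 0 < g) : 2 ^ g = 2 ^ (g-1) + 2 ^ (g-1) := by
  have := la_pow2 g 1 hg
  simp only [Nat.mul_one] at this
  omega

lemma la3 (g n : ℕ) (hg : g ≤ n + 1) :
    2 ^ g * ((n+1) - g + 1) ≤ 2 ^ (g-1) * (n - (g-1) + 1) + 2 ^ (g-1) * (n - (g-1) + 1) := by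
  rcases Nat.eq_zero_or_pos g with rfl | hg1
  · simp only [pow_zero, one_mul, Nat.sub_zero]
    omega
  · apply le_of_eq
    rw [show (n+1) - g + 1 = n - (g-1) + 1 from by omega, la_pow2 g _ hg1]
    omega

lemma la4 (g n : ℕ) (hgn : g ≤ n) :
    2 ^ g * ((n+1) - g + 1) = 2 ^ g * (n - g + 1) + 2 ^ g := by
  rw [show (n+1) - g + 1 = (n - g + 1) + 1 from by omega, Nat.mul_add, Nat.mul_one]

lemma la5 (hh n : ℕ) (hhn : hh ≤ n) : 2 ^ hh * ((n+1) - hh) = 2 ^ hh * (n - hh + 1) := by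
  rw [show (n+1) - hh = n - hh + 1 from by omega]

lemma la6 (Big Dn A : ℕ) (h1 : A ≤ Big) (h2 : Dn ≤ Big) : A ≤ (Big - Dn) + Dn := by omega

lemma la7 (hh n : ℕ) (h1 : hh ≤ n + 1) (hn : 1 ≤ n) :
    2 ^ hh * ((n+1) - hh) ≤ 2 ^ (hh-1) * (n - (hh-1)) + 2 ^ (hh-1) * (n - (hh-1)) := by
  rcases Nat.eq_zero_or_pos hh with rfl | hh1
  · simp only [pow_zero, one_mul, Nat.sub_zero]
    omega
  · apply le_of_eq
    rw [show (n+1) - hh = n - (hh-1) from by omega, la_pow2 hh _ hh1]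
    omega

lemma nbr_half_ge {n : ℕ} {D E : Set (Fin (n+1) → Bool)} {b : Bool}
    (hE : E = {x ∈ D | x (Fin.last n) = b}) {v : Fin (n+1) → Bool} (hv : v ∈ E) {m : ℕ}
    (hdeg : m ≤ (nbr (n+1) D v).ncard) : m - 1 ≤ (nbr (n+1) E v).ncard := by
  have hvb : v (Fin.last n) = b := by rw [hE] at hv; exact hv.2
  have hsub : nbr (n+1) D v ⊆ insert (mv v (Fin.last n)) (nbr (n+1) E v) := by
    rintro y ⟨hyD, k, rfl⟩
    by_cases hk : k = Fin.last n
    · subst hk; exact Set.mem_insert _ _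
    · right
      refine ⟨?_, k, rfl⟩
      rw [hE]
      exact ⟨hyD, by rw [mv_top_of_ne_last _ hk]; exact hvb⟩
  have h1 : m ≤ (insert (mv v (Fin.last n)) (nbr (n+1) E v)).ncard :=
    le_trans hdeg (Set.ncard_le_ncard hsub (Set.toFinite _))
  have h2 := Set.ncard_insert_le (mv v (Fin.last n)) (nbr (n+1) E v)
  omega

theorem tool1 : ∀ n : ℕ, ∀ g ≤ n, ∀ D : Set (Fin n → Bool), D.Nonempty →
    (∀ v ∈ D, g ≤ (nbr n D v).ncard) → 2 ^ g ≤ D.ncard := by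
  intro n
  induction n with
  | zero =>
    intro g hg D hne _
    obtain rfl : g = 0 := Nat.le_zero.mp hg
    simpa using Nat.succ_le_of_lt ((Set.ncard_pos (Set.toFinite D)).2 hne)
  | succ n ih =>
    intro g hg D hne hdeg
    have key : ∀ (b : Bool) (E : Set (Fin (n+1) → Bool)), E.Nonempty →
        (∀ x ∈ E, x (Fin.last n) = b) → ∀ m, m ≤ n → (∀ v ∈ E, m ≤ (nbr (n+1) E v).ncard) →
        2 ^ m ≤ E.ncard := by
      intro b E hEne hEb m hm hEdeg
      have h2 := ih m hm (lowf '' E) (hEne.image _) ?_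
      · rwa [ncard_lowf_image hEb] at h2
      · rintro w ⟨v, hv, rfl⟩
        rw [← nbr_lowf hEb hv, ncard_lowf_image (fun x hx => hEb x hx.1)]
        exact hEdeg v hv
    rcases Nat.eq_zero_or_pos g with rfl | hg1
    · simpa using Nat.succ_le_of_lt ((Set.ncard_pos (Set.toFinite D)).2 hne)
    by_cases hc : (∃ x ∈ D, x (Fin.last n) = false) ∧ (∃ x ∈ D, x (Fin.last n) = true)
    · obtain ⟨⟨x0, hx0, hx0b⟩, ⟨x1, hx1, hx1b⟩⟩ := hc
      have hb : ∀ (b : Bool) (E : Set (Fin (n+1) → Bool)),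
          E = {x ∈ D | x (Fin.last n) = b} → E.Nonempty → 2 ^ (g-1) ≤ E.ncard := by
        intro b E hE hEne
        refine key b E hEne (fun x hx => by rw [hE] at hx; exact hx.2) (g-1) (by omega) ?_
        intro v hv
        have hvD : v ∈ D := by rw [hE] at hv; exact hv.1
        exact nbr_half_ge hE hv (hdeg v hvD)
      have e1 := hb false {x ∈ D | x (Fin.last n) = false} rfl ⟨x0, hx0, hx0b⟩
      have e2 := hb true {x ∈ D | x (Fin.last n) = true} rfl ⟨x1, hx1, hx1b⟩
      have hdisj : Disjoint {x ∈ D | x (Fin.last n) = false} {x ∈ D | x (Fin.last n) = true} := by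
        rw [Set.disjoint_left]
        rintro x ⟨-, ha⟩ ⟨-, hb2⟩
        rw [ha] at hb2; cases hb2
      have hsplit : D = {x ∈ D | x (Fin.last n) = false} ∪ {x ∈ D | x (Fin.last n) = true} := by
        ext x
        constructor
        · intro hx
          cases hxb : x (Fin.last n)
          · exact Or.inl ⟨hx, hxb⟩
          · exact Or.inr ⟨hx, hxb⟩
        · rintro (⟨hx, -⟩ | ⟨hx, -⟩) <;> exact hx
      have e3 : D.ncard = {x ∈ D | x (Fin.last n) = false}.ncard + {x ∈ D | x (Fin.last n) = true}.ncard := by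
        rw [congrArg Set.ncard hsplit]
        exact Set.ncard_union_eq hdisj (Set.toFinite _) (Set.toFinite _)
      calc 2 ^ g = 2 ^ (g-1) + 2 ^ (g-1) := la2 g hg1
        _ ≤ _ + _ := Nat.add_le_add e1 e2
        _ = D.ncard := e3.symm
    · rw [not_and_or] at hc
      have hone : ∃ b, ∀ x ∈ D, x (Fin.last n) = b := by
        rcases hc with h | h
        · push_neg at h
          exact ⟨true, fun x hx => by
            have := h x hx; cases hxb : x (Fin.last n)
            · exact absurd hxb this
            · rfl⟩
        · push_neg at h
          exact ⟨false, fun x hx => by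
            have := h x hx; cases hxb : x (Fin.last n)
            · rfl
            · exact absurd hxb this⟩
      obtain ⟨b, hDb⟩ := hone
      have hgn : g ≤ n := by
        obtain ⟨v, hv⟩ := hne
        have := le_trans (hdeg v hv) (nbr_ncard_le hDb (hDb v hv))
        omega
      exact key b D hne hDb g hgn hdeg

lemma cnb_mono {n : ℕ} {E D : Set (Fin n → Bool)} (h : E ⊆ D) : cnb n E ⊆ cnb n D := by
  rintro y (hy | ⟨v, hv, k, rfl⟩)
  · exact Or.inl (h hy)
  · exact Or.inr ⟨v, h hv, k, rfl⟩

theorem tool3 : ∀ n : ℕ, ∀ g ≤ n, ∀ D : Set (Fin n → Bool), D.Nonempty →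
    (∀ v ∈ D, g ≤ (nbr n D v).ncard) → 2 ^ g * (n - g + 1) ≤ (cnb n D).ncard := by
  intro n
  induction n with
  | zero =>
    intro g hg D hne _
    obtain rfl : g = 0 := Nat.le_zero.mp hg
    simpa using Nat.succ_le_of_lt ((Set.ncard_pos (Set.toFinite _)).2 (hne.mono (subset_cnb 0 D)))
  | succ n ih =>
    intro g hg D hne hdeg
    have key : ∀ (b : Bool) (E : Set (Fin (n+1) → Bool)), E.Nonempty →
        (∀ x ∈ E, x (Fin.last n) = b) → ∀ m, m ≤ n → (∀ v ∈ E, m ≤ (nbr (n+1) E v).ncard) →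
        2 ^ m * (n - m + 1) ≤ ({y ∈ cnb (n+1) E | y (Fin.last n) = b}).ncard := by
      intro b E hEne hEb m hm hEdeg
      have h2 := ih m hm (lowf '' E) (hEne.image _) ?_
      · rwa [← cnb_lowf hEb, Set.ncard_image_of_injOn (lowf_injOn (fun y hy => hy.2))] at h2
      · rintro w ⟨v, hv, rfl⟩
        rw [← nbr_lowf hEb hv, ncard_lowf_image (fun x hx => hEb x hx.1)]
        exact hEdeg v hv
    by_cases hc : (∃ x ∈ D, x (Fin.last n) = false) ∧ (∃ x ∈ D, x (Fin.last n) = true)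
    · obtain ⟨⟨x0, hx0, hx0b⟩, ⟨x1, hx1, hx1b⟩⟩ := hc
      have piece : ∀ (b : Bool) (E : Set (Fin (n+1) → Bool)),
          E = {x ∈ D | x (Fin.last n) = b} → E.Nonempty →
          2 ^ (g-1) * (n - (g-1) + 1) ≤ ({y ∈ cnb (n+1) E | y (Fin.last n) = b}).ncard := by
        intro b E hE hEne
        refine key b E hEne (fun x hx => by rw [hE] at hx; exact hx.2) (g-1) (by omega) ?_
        intro v hv
        have hvD : v ∈ D := by rw [hE] at hv; exact hv.1
        exact nbr_half_ge hE hv (hdeg v hvD)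
      have e1 := piece false {x ∈ D | x (Fin.last n) = false} rfl ⟨x0, hx0, hx0b⟩
      have e2 := piece true {x ∈ D | x (Fin.last n) = true} rfl ⟨x1, hx1, hx1b⟩
      set S0 := {y ∈ cnb (n+1) {x ∈ D | x (Fin.last n) = false} | y (Fin.last n) = false}
      set S1 := {y ∈ cnb (n+1) {x ∈ D | x (Fin.last n) = true} | y (Fin.last n) = true}
      have hdisj : Disjoint S0 S1 := by
        rw [Set.disjoint_left]
        rintro y ⟨-, ha⟩ ⟨-, hb2⟩
        rw [ha] at hb2; cases hb2
      have hsub : S0 ∪ S1 ⊆ cnb (n+1) D := by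
        apply Set.union_subset
        · exact fun y hy => cnb_mono (fun x hx => hx.1) hy.1
        · exact fun y hy => cnb_mono (fun x hx => hx.1) hy.1
      have e3 := Set.ncard_le_ncard hsub (Set.toFinite _)
      rw [Set.ncard_union_eq hdisj (Set.toFinite _) (Set.toFinite _)] at e3
      calc 2 ^ g * ((n+1) - g + 1)
          ≤ 2 ^ (g-1) * (n - (g-1) + 1) + 2 ^ (g-1) * (n - (g-1) + 1) := la3 g n hg
        _ ≤ S0.ncard + S1.ncard := Nat.add_le_add e1 e2
        _ ≤ (cnb (n+1) D).ncard := e3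
    · rw [not_and_or] at hc
      have hone : ∃ b, ∀ x ∈ D, x (Fin.last n) = b := by
        rcases hc with h | h
        · push_neg at h
          exact ⟨true, fun x hx => by
            have := h x hx; cases hxb : x (Fin.last n)
            · exact absurd hxb this
            · rfl⟩
        · push_neg at h
          exact ⟨false, fun x hx => by
            have := h x hx; cases hxb : x (Fin.last n)
            · rfl
            · exact absurd hxb this⟩
      obtain ⟨b, hDb⟩ := hone
      have hgn : g ≤ n := by
        obtain ⟨v, hv⟩ := hne
        have := le_trans (hdeg v hv) (nbr_ncard_le hDb (hDb v hv))
        omega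
      have h1 := key b D hne hDb g hgn hdeg
      set P := (fun v => mv v (Fin.last n)) '' D with hP
      have hPsub : P ⊆ cnb (n+1) D := by
        rintro y ⟨v, hv, rfl⟩
        exact Or.inr ⟨v, hv, Fin.last n, rfl⟩
      have hPcard : P.ncard = D.ncard := Set.ncard_image_of_injOn (partner_injOn D)
      have hDcard : 2 ^ g ≤ D.ncard := tool1 (n+1) g (Nat.le_succ_of_le hgn) D hne hdeg
      have hdisj : Disjoint {y ∈ cnb (n+1) D | y (Fin.last n) = b} P := by
        rw [Set.disjoint_left]
        rintro y ⟨-, hyb⟩ ⟨v, hv, rfl⟩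
        have hyb' : mv v (Fin.last n) (Fin.last n) = b := hyb
        rw [mv_last_top, hDb v hv] at hyb'
        cases b <;> simp at hyb'
      have hsub : {y ∈ cnb (n+1) D | y (Fin.last n) = b} ∪ P ⊆ cnb (n+1) D :=
        Set.union_subset (fun y hy => hy.1) hPsub
      have e3 := Set.ncard_le_ncard hsub (Set.toFinite _)
      rw [Set.ncard_union_eq hdisj (Set.toFinite _) (Set.toFinite _)] at e3
      calc 2 ^ g * ((n+1) - g + 1) = 2 ^ g * (n - g + 1) + 2 ^ g := la4 g n hgn
        _ ≤ {y ∈ cnb (n+1) D | y (Fin.last n) = b}.ncard + P.ncard :=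
            Nat.add_le_add h1 (hPcard ▸ hDcard)
        _ ≤ (cnb (n+1) D).ncard := e3

end Scratch6

namespace Scratch7
open Scratch Scratch5 Scratch6

lemma lowf_snoc {n : ℕ} (z : Fin n → Bool) (b : Bool) : lowf (Fin.snoc z b) = z := by
  funext j
  simp [lowf]

lemma snoc_last' {n : ℕ} (z : Fin n → Bool) (b : Bool) :
    @Fin.snoc n (fun _ => Bool) z b (Fin.last n) = b := by simp

lemma tool4_half {n : ℕ} {hh : ℕ} {C D : Set (Fin (n+1) → Bool)} {b : Bool}
    (hDtop : ∀ x ∈ D, x (Fin.last n) = b) (hDne : D.Nonempty)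
    (hnadj : ∀ u ∈ C, ∀ v ∈ D, ∀ k : Fin (n+1), u ≠ mv v k)
    (hdegD : ∀ v ∈ D, hh ≤ (nbr (n+1) D v).ncard) :
    2 ^ hh * ((n+1) - hh) ≤ (Set.univ \ (C ∪ D)).ncard := by
  have hhn : hh ≤ n := by
    obtain ⟨v, hv⟩ := hDne
    exact le_trans (hdegD v hv) (nbr_ncard_le hDtop (hDtop v hv))
  set P := (fun v => mv v (Fin.last n)) '' D with hP
  set Q := {y ∈ cnb (n+1) D | y (Fin.last n) = b} \ D with hQ
  have hPF : P ⊆ Set.univ \ (C ∪ D) := by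
    rintro y ⟨v, hv, rfl⟩
    refine ⟨trivial, ?_⟩
    rintro (hC | hD')
    · exact hnadj _ hC v hv _ rfl
    · have h1 : mv v (Fin.last n) (Fin.last n) = b := hDtop _ hD'
      rw [mv_last_top, hDtop v hv] at h1
      cases b <;> simp at h1
  have hQF : Q ⊆ Set.univ \ (C ∪ D) := by
    rintro y ⟨⟨hyc, hyb⟩, hyD⟩
    refine ⟨trivial, ?_⟩
    rintro (hC | hD')
    · rcases hyc with hyD2 | ⟨v, hv, k, rfl⟩
      · exact hyD hyD2
      · exact hnadj _ hC v hv _ rfl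
    · exact hyD hD'
  have hdisjPQ : Disjoint Q P := by
    rw [Set.disjoint_left]
    rintro y ⟨⟨-, hyb⟩, -⟩ ⟨v, hv, rfl⟩
    have hyb' : mv v (Fin.last n) (Fin.last n) = b := hyb
    rw [mv_last_top, hDtop v hv] at hyb'
    cases b <;> simp at hyb'
  have hDsub : D ⊆ {y ∈ cnb (n+1) D | y (Fin.last n) = b} :=
    fun y hy => ⟨Or.inl hy, hDtop y hy⟩
  have hQcard : Q.ncard = ({y ∈ cnb (n+1) D | y (Fin.last n) = b}).ncard - D.ncard :=
    Set.ncard_diff hDsub (Set.toFinite _)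
  have hbig : 2 ^ hh * (n - hh + 1) ≤ ({y ∈ cnb (n+1) D | y (Fin.last n) = b}).ncard := by
    have h3 := tool3 n hh hhn (lowf '' D) (hDne.image _) ?_
    · rwa [← cnb_lowf hDtop, Set.ncard_image_of_injOn (lowf_injOn (fun y hy => hy.2))] at h3
    · rintro w ⟨v, hv, rfl⟩
      rw [← nbr_lowf hDtop hv, ncard_lowf_image (fun x hx => hDtop x hx.1)]
      exact hdegD v hv
  have hPcard : P.ncard = D.ncard := Set.ncard_image_of_injOn (partner_injOn D)
  have hDle : D.ncard ≤ ({y ∈ cnb (n+1) D | y (Fin.last n) = b}).ncard :=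
    Set.ncard_le_ncard hDsub (Set.toFinite _)
  have hun := Set.ncard_le_ncard (Set.union_subset hQF hPF) (Set.toFinite _)
  rw [Set.ncard_union_eq hdisjPQ (Set.toFinite _) (Set.toFinite _)] at hun
  calc 2 ^ hh * ((n+1) - hh) = 2 ^ hh * (n - hh + 1) := la5 hh n hhn
    _ ≤ Q.ncard + P.ncard := by
        rw [hQcard, hPcard]
        exact la6 _ _ _ hbig hDle
    _ ≤ (Set.univ \ (C ∪ D)).ncard := hun

lemma lowtop_diff_ncard {n : ℕ} (b : Bool) (C D : Set (Fin (n+1) → Bool)) :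
    (Set.univ \ (lowf '' {x ∈ C | x (Fin.last n) = b} ∪ lowf '' {x ∈ D | x (Fin.last n) = b})).ncard
      = ({y | y (Fin.last n) = b} \ (C ∪ D)).ncard := by
  rw [← Set.ncard_image_of_injOn (lowf_injOn (b := b) (D := {y | y (Fin.last n) = b} \ (C ∪ D))
    (fun x hx => hx.1))]
  congr 1
  ext z
  constructor
  · rintro ⟨-, hz⟩
    refine ⟨Fin.snoc z b, ⟨?_, ?_⟩, lowf_snoc z b⟩
    · exact snoc_last' z b
    · rintro (hC | hD)
      · exact hz (Or.inl ⟨Fin.snoc z b, ⟨hC, snoc_last' z b⟩, lowf_snoc z b⟩)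
      · exact hz (Or.inr ⟨Fin.snoc z b, ⟨hD, snoc_last' z b⟩, lowf_snoc z b⟩)
  · rintro ⟨y, ⟨hyb, hyCD⟩, rfl⟩
    refine ⟨trivial, ?_⟩
    rintro (⟨u, ⟨huC, hub⟩, hu⟩ | ⟨u, ⟨huD, hub⟩, hu⟩)
    · have : u = y := ext_lowtop hu (hub.trans hyb.symm)
      exact hyCD (Or.inl (this ▸ huC))
    · have : u = y := ext_lowtop hu (hub.trans hyb.symm)
      exact hyCD (Or.inr (this ▸ huD))

theorem tool4 : ∀ n : ℕ, ∀ hh ≤ n, ∀ C D : Set (Fin n → Bool), C.Nonempty → D.Nonempty →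
    Disjoint C D → (∀ u ∈ C, ∀ v ∈ D, ∀ k : Fin n, u ≠ mv v k) →
    (∀ v ∈ C, hh ≤ (nbr n C v).ncard) → (∀ v ∈ D, hh ≤ (nbr n D v).ncard) →
    2 ^ hh * (n - hh) ≤ (Set.univ \ (C ∪ D)).ncard := by
  intro n
  induction n with
  | zero =>
    intro hh hhn C D _ _ _ _ _ _
    obtain rfl : hh = 0 := Nat.le_zero.mp hhn
    simp
  | succ n ih =>
    intro hh hhn C D hCne hDne hdisj hnadj hdegC hdegD
    have hnadj' : ∀ u ∈ D, ∀ v ∈ C, ∀ k : Fin (n+1), u ≠ mv v k := by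
      intro u hu v hv k he
      exact hnadj v hv u hu k (by rw [he, mv_mv])
    by_cases hDhalf : ∃ b, ∀ x ∈ D, x (Fin.last n) = b
    · obtain ⟨b, hb⟩ := hDhalf
      exact tool4_half hb hDne hnadj hdegD
    by_cases hChalf : ∃ b, ∀ x ∈ C, x (Fin.last n) = b
    · obtain ⟨b, hb⟩ := hChalf
      have := tool4_half hb hCne hnadj' hdegC
      rwa [Set.union_comm] at this
    push_neg at hDhalf hChalf
    have hsplit : ∀ (E : Set (Fin (n+1) → Bool)), (∀ b : Bool, ∃ x ∈ E, x (Fin.last n) ≠ b) →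
        ∀ b : Bool, ∃ x ∈ E, x (Fin.last n) = b := by
      intro E hE b
      obtain ⟨x, hx, hxb⟩ := hE !b
      refine ⟨x, hx, ?_⟩
      cases b <;> revert hxb <;> cases hxE : x (Fin.last n) <;> simp
    have hCs := hsplit C hChalf
    have hDs := hsplit D hDhalf
    rcases Nat.eq_zero_or_pos n with rfl | hn1
    · exfalso
      obtain ⟨x, hxC, hx⟩ := hCs false
      obtain ⟨y, hyD, hy⟩ := hDs false
      have hxy : x = y := by
        funext j
        have hj : j = Fin.last 0 := Fin.ext (by have := j.isLt; simp only [Fin.val_last]; omega)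
        rw [hj, hx, hy]
      exact Set.disjoint_left.1 hdisj hxC (hxy ▸ hyD)
    have piece : ∀ b : Bool,
        2 ^ (hh-1) * (n - (hh-1)) ≤ ({y | y (Fin.last n) = b} \ (C ∪ D)).ncard := by
      intro b
      obtain ⟨xc, hxc, hxcb⟩ := hCs b
      obtain ⟨xd, hxd, hxdb⟩ := hDs b
      have hCt : ∀ x ∈ {x ∈ C | x (Fin.last n) = b}, x (Fin.last n) = b := fun x hx => hx.2
      have hDt : ∀ x ∈ {x ∈ D | x (Fin.last n) = b}, x (Fin.last n) = b := fun x hx => hx.2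
      have h4 := ih (hh-1) (by omega) (lowf '' {x ∈ C | x (Fin.last n) = b})
        (lowf '' {x ∈ D | x (Fin.last n) = b})
        ⟨lowf xc, ⟨xc, ⟨hxc, hxcb⟩, rfl⟩⟩ ⟨lowf xd, ⟨xd, ⟨hxd, hxdb⟩, rfl⟩⟩ ?_ ?_ ?_ ?_
      · rwa [lowtop_diff_ncard b C D] at h4
      · apply Set.disjoint_image_image
        intro u hu v hv he
        have huv : u = v := ext_lowtop he (hu.2.trans hv.2.symm)
        exact Set.disjoint_left.1 hdisj (huv ▸ hu.1) hv.1
      · rintro u ⟨u0, hu0, rfl⟩ v ⟨v0, hv0, rfl⟩ k he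
        have : u0 = mv v0 k.castSucc := by
          apply ext_lowtop
          · rw [lowf_mv]; exact he
          · rw [mv_castSucc_top, hu0.2, hv0.2]
        exact hnadj u0 hu0.1 v0 hv0.1 k.castSucc this
      · rintro w ⟨v, hv, rfl⟩
        rw [← nbr_lowf hCt hv, ncard_lowf_image (fun x hx => hCt x hx.1)]
        exact nbr_half_ge rfl hv (hdegC v hv.1)
      · rintro w ⟨v, hv, rfl⟩
        rw [← nbr_lowf hDt hv, ncard_lowf_image (fun x hx => hDt x hx.1)]
        exact nbr_half_ge rfl hv (hdegD v hv.1)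
    have e0 : Set.univ \ (C ∪ D) =
        ({y | y (Fin.last n) = false} \ (C ∪ D)) ∪ ({y | y (Fin.last n) = true} \ (C ∪ D)) := by
      ext y
      constructor
      · rintro ⟨-, hy⟩
        cases hyb : y (Fin.last n)
        · exact Or.inl ⟨hyb, hy⟩
        · exact Or.inr ⟨hyb, hy⟩
      · rintro (⟨-, hy⟩ | ⟨-, hy⟩) <;> exact ⟨trivial, hy⟩
    have hdisj2 : Disjoint ({y | y (Fin.last n) = false} \ (C ∪ D))
        ({y | y (Fin.last n) = true} \ (C ∪ D)) := by
      rw [Set.disjoint_left]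
      rintro y ⟨hy1, -⟩ ⟨hy2, -⟩
      have h1 : y (Fin.last n) = false := hy1
      have h2 : y (Fin.last n) = true := hy2
      rw [h1] at h2; cases h2
    have e3 : (Set.univ \ (C ∪ D)).ncard =
        ({y | y (Fin.last n) = false} \ (C ∪ D)).ncard +
        ({y | y (Fin.last n) = true} \ (C ∪ D)).ncard := by
      rw [congrArg Set.ncard e0]
      exact Set.ncard_union_eq hdisj2 (Set.toFinite _) (Set.toFinite _)
    calc 2 ^ hh * ((n+1) - hh)
        ≤ 2 ^ (hh-1) * (n - (hh-1)) + 2 ^ (hh-1) * (n - (hh-1)) := la7 hh n hhn hn1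
      _ ≤ ({y | y (Fin.last n) = false} \ (C ∪ D)).ncard +
          ({y | y (Fin.last n) = true} \ (C ∪ D)).ncard := Nat.add_le_add (piece false) (piece true)
      _ = (Set.univ \ (C ∪ D)).ncard := e3.symm

end Scratch7

namespace Scratch8
open Scratch Scratch2 Scratch5 Scratch6 Scratch7

-- arithmetic lemmas (clean contexts so omega is safe)
lemma la8 {g s t : ℕ} (hst : s ≤ t) : 2^g*(s-g+1) ≤ 2^g*(t-g+1) :=
  Nat.mul_le_mul_left _ (by omega)

lemma pow_le_aux {g s : ℕ} (hg : g ≤ s) : 2^g*(s-g+1) ≤ 2^s := by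
  have h1 : s - g + 1 ≤ 2^(s-g) := Nat.lt_two_pow_self (n := s-g)
  calc 2^g*(s-g+1) ≤ 2^g*2^(s-g) := Nat.mul_le_mul_left _ h1
    _ = 2^s := by rw [← pow_add]; congr 1; omega

lemma laA {g s : ℕ} (hg : g ≤ s) (hs : 1 ≤ s) :
    2^g*(s-g+1) ≤ 2^(g-1)*(s-(g-1)) + 2^(g-1)*(s-(g-1)) := by
  rcases Nat.eq_zero_or_pos g with rfl | hg1
  · simp only [pow_zero, one_mul, Nat.sub_zero, Nat.zero_sub]
    omega
  · apply le_of_eq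
    have e : s - (g-1) = s - g + 1 := by omega
    rw [e, la_pow2 g _ hg1]
    omega

lemma laB {g s t : ℕ} (hg : g ≤ s) (hs : 1 ≤ s) (hst : s ≤ t) :
    2^g*(s-g+1) ≤ 2^(g-1)*(t-(g-1)) + 2^(g-1)*(t-(g-1)) :=
  le_trans (laA hg hs)
    (Nat.add_le_add (Nat.mul_le_mul_left _ (by omega)) (Nat.mul_le_mul_left _ (by omega)))

lemma laC {g s t : ℕ} (hg : g ≤ s) (hs : 1 ≤ s) (hst : s ≤ t) :
    2^g*(s-g+1) ≤ 2^(g-1)*(s-(g-1)) + 2^(g-1)*(t-(g-1)) :=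
  le_trans (laA hg hs) (Nat.add_le_add le_rfl (Nat.mul_le_mul_left _ (by omega)))

lemma rb_le {g s : ℕ} (hg : g ≤ s) (hs : 1 ≤ s) : 2^(g-1)*(s-(g-1)) ≤ 2^(s-1) := by
  rcases Nat.eq_zero_or_pos g with rfl | hg1
  · simp only [pow_zero, one_mul, Nat.zero_sub, Nat.sub_zero]
    have := Nat.lt_two_pow_self (n := s-1)
    omega
  · have h1 : s - (g-1) ≤ 2^(s-g) := by
      have := Nat.lt_two_pow_self (n := s-g)
      omega
    calc 2^(g-1)*(s-(g-1)) ≤ 2^(g-1)*2^(s-g) := Nat.mul_le_mul_left _ h1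
      _ = 2^(s-1) := by rw [← pow_add]; congr 1; omega

lemma twopow_pred {t : ℕ} (ht : 1 ≤ t) : 2^(t-1) ≤ 2^t - 1 := by
  have e : 2^t = 2^(t-1)*2 := by rw [← pow_succ]; congr 1; omega
  have p := Nat.one_le_two_pow (n := t-1)
  omega

lemma laD {g s t : ℕ} (hg : g ≤ s) (hs : 1 ≤ s) (hst : s ≤ t) :
    2^g*(s-g+1) ≤ (2^t - 1) + 2^(g-1)*(s-(g-1)) := by
  have h1 := laA hg hs
  have h2 := rb_le hg hs
  have h3 : (2:ℕ)^(s-1) ≤ 2^(t-1) := Nat.pow_le_pow_right (by norm_num) (by omega)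
  have h4 := twopow_pred (le_trans hs hst)
  omega

lemma laE {g s t : ℕ} (hg : g ≤ s) (hs : 1 ≤ s) (hst : s ≤ t) :
    2^g*(s-g+1) ≤ (2^s - 1) + 2^(g-1)*(t-(g-1)) := by
  have h1 := laC hg hs hst
  have h2 := rb_le hg hs
  have h4 := twopow_pred hs
  omega

lemma laF {g s t : ℕ} (hg : g ≤ s) (hst : s ≤ t) : 2^g*(s-g+1) ≤ 2^t :=
  le_trans (pow_le_aux hg) (Nat.pow_le_pow_right (by norm_num) hst)

end Scratch8

namespace Scratch9
open Scratch Scratch2 Scratch5 Scratch6 Scratch7 Scratch8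

variable {s t : ℕ}

lemma adj_flip01 {a : Fin s → Bool} {b : Fin t → Bool} :
    (LeTQ s t).Adj (a, b, false) (a, b, true) :=
  adj_iff.2 (Or.inl ⟨rfl, rfl, rfl⟩)

lemma adj_flip10 {a : Fin s → Bool} {b : Fin t → Bool} :
    (LeTQ s t).Adj (a, b, true) (a, b, false) :=
  adj_iff.2 (Or.inl ⟨rfl, rfl, rfl⟩)

lemma adj_row {b : Fin t → Bool} {a a' : Fin s → Bool} :
    (LeTQ s t).Adj (a, b, false) (a', b, false) ↔ ∃ k, a' = mv a k := by
  rw [adj_iff]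
  constructor
  · rintro (⟨-, -, h3⟩ | ⟨h1, -, -⟩ | ⟨-, -, -, k, h4⟩)
    · cases h3
    · cases h1
    · exact ⟨k, h4⟩
  · rintro ⟨k, hk⟩
    exact Or.inr (Or.inr ⟨rfl, rfl, rfl, k, hk⟩)

lemma adj_col {a : Fin s → Bool} {b b' : Fin t → Bool} :
    (LeTQ s t).Adj (a, b, true) (a, b', true) ↔ ∃ k, b' = mv b k := by
  rw [adj_iff]
  constructor
  · rintro (⟨-, -, h3⟩ | ⟨-, -, -, k, h4⟩ | ⟨h1, -, -⟩)
    · cases h3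
    · exact ⟨k, h4⟩
    · cases h1
  · rintro ⟨k, hk⟩
    exact Or.inr (Or.inl ⟨rfl, rfl, rfl, k, hk⟩)

lemma nbhd_c0 {a : Fin s → Bool} {b : Fin t → Bool} {w : LeTQVert s t} :
    (LeTQ s t).Adj (a, b, false) w ↔ w = (a, b, true) ∨ ∃ k, w = (mv a k, b, false) := by
  rcases w with ⟨w1, w2, w3⟩
  rw [adj_iff]
  constructor
  · rintro (⟨h1, h2, h3⟩ | ⟨h1, -, -⟩ | ⟨-, h2, h3, k, h4⟩)
    · have e1 : a = w1 := h1
      have e2 : b = w2 := h2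
      have e3 : w3 = true := h3
      left; rw [e1, e2, e3]
    · cases h1
    · have e1 : w3 = false := h2
      have e2 : b = w2 := h3
      have e3 : w1 = mv a k := h4
      right; exact ⟨k, by rw [e1, ← e2, e3]⟩
  · rintro (he | ⟨k, he⟩)
    · obtain ⟨rfl, rfl, rfl⟩ : w1 = a ∧ w2 = b ∧ w3 = true := by
        simpa [Prod.ext_iff] using he
      exact Or.inl ⟨rfl, rfl, rfl⟩
    · obtain ⟨rfl, rfl, rfl⟩ : w1 = mv a k ∧ w2 = b ∧ w3 = false := by
        simpa [Prod.ext_iff] using he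
      exact Or.inr (Or.inr ⟨rfl, rfl, rfl, k, rfl⟩)

lemma nbhd_c1 {a : Fin s → Bool} {b : Fin t → Bool} {w : LeTQVert s t} :
    (LeTQ s t).Adj (a, b, true) w ↔ w = (a, b, false) ∨ ∃ k, w = (a, mv b k, true) := by
  rcases w with ⟨w1, w2, w3⟩
  rw [adj_iff]
  constructor
  · rintro (⟨h1, h2, h3⟩ | ⟨-, h2, h3, k, h4⟩ | ⟨h1, -, -⟩)
    · have e1 : a = w1 := h1
      have e2 : b = w2 := h2
      have e3 : w3 = false := h3
      left; rw [e1, e2, e3]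
    · have e1 : w3 = true := h2
      have e2 : a = w1 := h3
      have e3 : w2 = mv b k := h4
      right; exact ⟨k, by rw [e1, ← e2, e3]⟩
    · cases h1
  · rintro (he | ⟨k, he⟩)
    · obtain ⟨rfl, rfl, rfl⟩ : w1 = a ∧ w2 = b ∧ w3 = false := by
        simpa [Prod.ext_iff] using he
      exact Or.inl ⟨rfl, rfl, rfl⟩
    · obtain ⟨rfl, rfl, rfl⟩ : w1 = a ∧ w2 = mv b k ∧ w3 = true := by
        simpa [Prod.ext_iff] using he
      exact Or.inr (Or.inl ⟨rfl, rfl, rfl, k, rfl⟩)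

def rowSet (U : Set (LeTQVert s t)) (b : Fin t → Bool) : Set (Fin s → Bool) :=
  {a | (a, b, false) ∈ U}

def colSet (U : Set (LeTQVert s t)) (a : Fin s → Bool) : Set (Fin t → Bool) :=
  {bb | (a, bb, true) ∈ U}

lemma row_nbhd_sub (U : Set (LeTQVert s t)) (a : Fin s → Bool) (b : Fin t → Bool) :
    (LeTQ s t).neighborSet (a, b, false) ∩ U ⊆
      insert ((a, b, true) : LeTQVert s t)
        ((fun a' => ((a', b, false) : LeTQVert s t)) '' (nbr s (rowSet U b) a)) := by
  rintro w ⟨hadj, hwU⟩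
  rcases nbhd_c0.1 hadj with rfl | ⟨k, rfl⟩
  · exact Set.mem_insert _ _
  · exact Set.mem_insert_of_mem _ ⟨mv a k, ⟨hwU, k, rfl⟩, rfl⟩

lemma col_nbhd_sub (U : Set (LeTQVert s t)) (a : Fin s → Bool) (b : Fin t → Bool) :
    (LeTQ s t).neighborSet (a, b, true) ∩ U ⊆
      insert ((a, b, false) : LeTQVert s t)
        ((fun b' => ((a, b', true) : LeTQVert s t)) '' (nbr t (colSet U a) b)) := by
  rintro w ⟨hadj, hwU⟩
  rcases nbhd_c1.1 hadj with rfl | ⟨k, rfl⟩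
  · exact Set.mem_insert _ _
  · exact Set.mem_insert_of_mem _ ⟨mv b k, ⟨hwU, k, rfl⟩, rfl⟩

lemma row_deg {g : ℕ} (U : Set (LeTQVert s t)) {a : Fin s → Bool} {b : Fin t → Bool}
    (hdeg : g ≤ (((LeTQ s t).neighborSet (a, b, false)) ∩ U).ncard) :
    g - 1 ≤ (nbr s (rowSet U b) a).ncard := by
  rw [Nat.sub_le_iff_le_add]
  calc g ≤ (((LeTQ s t).neighborSet (a, b, false)) ∩ U).ncard := hdeg
    _ ≤ (insert ((a, b, true) : LeTQVert s t)
        ((fun a' => ((a', b, false) : LeTQVert s t)) '' (nbr s (rowSet U b) a))).ncard :=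
      Set.ncard_le_ncard (row_nbhd_sub U a b) (Set.toFinite _)
    _ ≤ ((fun a' => ((a', b, false) : LeTQVert s t)) '' (nbr s (rowSet U b) a)).ncard + 1 :=
      Set.ncard_insert_le _ _
    _ = (nbr s (rowSet U b) a).ncard + 1 := by
      rw [Set.ncard_image_of_injective _ (fun x y h => (Prod.ext_iff.1 h).1)]

lemma col_deg {g : ℕ} (U : Set (LeTQVert s t)) {a : Fin s → Bool} {b : Fin t → Bool}
    (hdeg : g ≤ (((LeTQ s t).neighborSet (a, b, true)) ∩ U).ncard) :
    g - 1 ≤ (nbr t (colSet U a) b).ncard := by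
  rw [Nat.sub_le_iff_le_add]
  calc g ≤ (((LeTQ s t).neighborSet (a, b, true)) ∩ U).ncard := hdeg
    _ ≤ (insert ((a, b, false) : LeTQVert s t)
        ((fun b' => ((a, b', true) : LeTQVert s t)) '' (nbr t (colSet U a) b))).ncard :=
      Set.ncard_le_ncard (col_nbhd_sub U a b) (Set.toFinite _)
    _ ≤ ((fun b' => ((a, b', true) : LeTQVert s t)) '' (nbr t (colSet U a) b)).ncard + 1 :=
      Set.ncard_insert_le _ _
    _ = (nbr t (colSet U a) b).ncard + 1 := by
      rw [Set.ncard_image_of_injective _ (fun x y h => (Prod.ext_iff.1 (Prod.ext_iff.1 h).2).1)]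

lemma row_deg_strong {g : ℕ} (U : Set (LeTQVert s t)) {a : Fin s → Bool} {b : Fin t → Bool}
    (hnot : ((a, b, true) : LeTQVert s t) ∉ U)
    (hdeg : g ≤ (((LeTQ s t).neighborSet (a, b, false)) ∩ U).ncard) :
    g ≤ (nbr s (rowSet U b) a).ncard := by
  have hsub : (LeTQ s t).neighborSet (a, b, false) ∩ U ⊆
      (fun a' => ((a', b, false) : LeTQVert s t)) '' (nbr s (rowSet U b) a) := by
    intro w hw
    rcases row_nbhd_sub U a b hw with rfl | hmem
    · exact absurd hw.2 hnot
    · exact hmem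
  calc g ≤ _ := hdeg
    _ ≤ ((fun a' => ((a', b, false) : LeTQVert s t)) '' (nbr s (rowSet U b) a)).ncard :=
      Set.ncard_le_ncard hsub (Set.toFinite _)
    _ = _ := Set.ncard_image_of_injective _ (fun x y h => (Prod.ext_iff.1 h).1)

lemma col_deg_strong {g : ℕ} (U : Set (LeTQVert s t)) {a : Fin s → Bool} {b : Fin t → Bool}
    (hnot : ((a, b, false) : LeTQVert s t) ∉ U)
    (hdeg : g ≤ (((LeTQ s t).neighborSet (a, b, true)) ∩ U).ncard) :
    g ≤ (nbr t (colSet U a) b).ncard := by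
  have hsub : (LeTQ s t).neighborSet (a, b, true) ∩ U ⊆
      (fun b' => ((a, b', true) : LeTQVert s t)) '' (nbr t (colSet U a) b) := by
    intro w hw
    rcases col_nbhd_sub U a b hw with rfl | hmem
    · exact absurd hw.2 hnot
    · exact hmem
  calc g ≤ _ := hdeg
    _ ≤ ((fun b' => ((a, b', true) : LeTQVert s t)) '' (nbr t (colSet U a) b)).ncard :=
      Set.ncard_le_ncard hsub (Set.toFinite _)
    _ = _ := Set.ncard_image_of_injective _ (fun x y h => (Prod.ext_iff.1 (Prod.ext_iff.1 h).2).1)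

end Scratch9

namespace Scratch10
open Scratch Scratch2 Scratch5 Scratch6 Scratch7 Scratch8 Scratch9

variable {s t g : ℕ}

lemma case_L0 (hg : g ≤ s) (U W : Set (LeTQVert s t)) (hUne : U.Nonempty)
    (hU0 : ∀ v ∈ U, v.2.2 = false)
    (hnadj : ∀ u ∈ U, ∀ w, (LeTQ s t).Adj u w → w ∉ W)
    (hdegU : ∀ v ∈ U, g ≤ (((LeTQ s t).neighborSet v) ∩ U).ncard) :
    2 ^ g * (s - g + 1) ≤ (Set.univ \ (U ∪ W)).ncard := by
  classical
  obtain ⟨⟨a₀, b₀, c₀⟩, hv₀⟩ := hUne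
  have hc₀ : c₀ = false := hU0 _ hv₀
  subst hc₀
  have hdeg' : ∀ a ∈ rowSet U b₀, g ≤ (nbr s (rowSet U b₀) a).ncard := by
    intro a ha
    exact row_deg_strong U (fun hmem => by cases hU0 _ hmem) (hdegU _ ha)
  have h3 := tool3 s g hg (rowSet U b₀) ⟨a₀, hv₀⟩ hdeg'
  set φ := fun x : Fin s → Bool =>
    if x ∈ rowSet U b₀ then ((x, b₀, true) : LeTQVert s t) else (x, b₀, false) with hφ
  have hmem : ∀ x ∈ cnb s (rowSet U b₀), φ x ∈ Set.univ \ (U ∪ W) := by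
    intro x hx
    by_cases hxD : x ∈ rowSet U b₀
    · rw [hφ]; simp only [if_pos hxD]
      refine ⟨trivial, ?_⟩
      rintro (hU | hW)
      · cases hU0 _ hU
      · exact hnadj _ hxD _ adj_flip01 hW
    · rw [hφ]; simp only [if_neg hxD]
      rcases hx with hxD2 | ⟨d, hd, k, rfl⟩
      · exact absurd hxD2 hxD
      · refine ⟨trivial, ?_⟩
        rintro (hU | hW)
        · exact hxD hU
        · exact hnadj _ hd _ (adj_row.2 ⟨k, rfl⟩) hW
  have hinj : Set.InjOn φ (cnb s (rowSet U b₀)) := by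
    intro x hx y hy hxy
    rw [hφ] at hxy
    by_cases hxD : x ∈ rowSet U b₀ <;> by_cases hyD : y ∈ rowSet U b₀
    · simp only [if_pos hxD, if_pos hyD] at hxy; exact (Prod.ext_iff.1 hxy).1
    · simp only [if_pos hxD, if_neg hyD] at hxy
      exact absurd (Prod.ext_iff.1 (Prod.ext_iff.1 hxy).2).2 (by simp)
    · simp only [if_neg hxD, if_pos hyD] at hxy
      exact absurd (Prod.ext_iff.1 (Prod.ext_iff.1 hxy).2).2 (by simp)
    · simp only [if_neg hxD, if_neg hyD] at hxy; exact (Prod.ext_iff.1 hxy).1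
  calc 2^g*(s-g+1) ≤ (cnb s (rowSet U b₀)).ncard := h3
    _ = (φ '' cnb s (rowSet U b₀)).ncard := (Set.ncard_image_of_injOn hinj).symm
    _ ≤ (Set.univ \ (U ∪ W)).ncard :=
      Set.ncard_le_ncard (Set.image_subset_iff.mpr hmem) (Set.toFinite _)

lemma case_L1 (hg : g ≤ t) (U W : Set (LeTQVert s t)) (hUne : U.Nonempty)
    (hU1 : ∀ v ∈ U, v.2.2 = true)
    (hnadj : ∀ u ∈ U, ∀ w, (LeTQ s t).Adj u w → w ∉ W)
    (hdegU : ∀ v ∈ U, g ≤ (((LeTQ s t).neighborSet v) ∩ U).ncard) :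
    2 ^ g * (t - g + 1) ≤ (Set.univ \ (U ∪ W)).ncard := by
  classical
  obtain ⟨⟨a₀, b₀, c₀⟩, hv₀⟩ := hUne
  have hc₀ : c₀ = true := hU1 _ hv₀
  subst hc₀
  have hdeg' : ∀ b ∈ colSet U a₀, g ≤ (nbr t (colSet U a₀) b).ncard := by
    intro b hb
    exact col_deg_strong U (fun hmem => by cases hU1 _ hmem) (hdegU _ hb)
  have h3 := tool3 t g hg (colSet U a₀) ⟨b₀, hv₀⟩ hdeg'
  set φ := fun x : Fin t → Bool =>
    if x ∈ colSet U a₀ then ((a₀, x, false) : LeTQVert s t) else (a₀, x, true) with hφ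
  have hmem : ∀ x ∈ cnb t (colSet U a₀), φ x ∈ Set.univ \ (U ∪ W) := by
    intro x hx
    by_cases hxD : x ∈ colSet U a₀
    · rw [hφ]; simp only [if_pos hxD]
      refine ⟨trivial, ?_⟩
      rintro (hU | hW)
      · cases hU1 _ hU
      · exact hnadj _ hxD _ adj_flip10 hW
    · rw [hφ]; simp only [if_neg hxD]
      rcases hx with hxD2 | ⟨d, hd, k, rfl⟩
      · exact absurd hxD2 hxD
      · refine ⟨trivial, ?_⟩
        rintro (hU | hW)
        · exact hxD hU
        · exact hnadj _ hd _ (adj_col.2 ⟨k, rfl⟩) hW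
  have hinj : Set.InjOn φ (cnb t (colSet U a₀)) := by
    intro x hx y hy hxy
    rw [hφ] at hxy
    by_cases hxD : x ∈ colSet U a₀ <;> by_cases hyD : y ∈ colSet U a₀
    · simp only [if_pos hxD, if_pos hyD] at hxy; exact (Prod.ext_iff.1 (Prod.ext_iff.1 hxy).2).1
    · simp only [if_pos hxD, if_neg hyD] at hxy
      exact absurd (Prod.ext_iff.1 (Prod.ext_iff.1 hxy).2).2 (by simp)
    · simp only [if_neg hxD, if_pos hyD] at hxy
      exact absurd (Prod.ext_iff.1 (Prod.ext_iff.1 hxy).2).2 (by simp)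
    · simp only [if_neg hxD, if_neg hyD] at hxy; exact (Prod.ext_iff.1 (Prod.ext_iff.1 hxy).2).1
  calc 2^g*(t-g+1) ≤ (cnb t (colSet U a₀)).ncard := h3
    _ = (φ '' cnb t (colSet U a₀)).ncard := (Set.ncard_image_of_injOn hinj).symm
    _ ≤ (Set.univ \ (U ∪ W)).ncard :=
      Set.ncard_le_ncard (Set.image_subset_iff.mpr hmem) (Set.toFinite _)

lemma mixed_row (hg : g ≤ s) (C D : Set (LeTQVert s t)) {b : Fin t → Bool}
    (hmix : (rowSet C b).Nonempty ∧ (rowSet D b).Nonempty)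
    (hdisj : Disjoint C D)
    (hnadj : ∀ u ∈ C, ∀ v ∈ D, ¬ (LeTQ s t).Adj u v)
    (hdegC : ∀ v ∈ C, g ≤ (((LeTQ s t).neighborSet v) ∩ C).ncard)
    (hdegD : ∀ v ∈ D, g ≤ (((LeTQ s t).neighborSet v) ∩ D).ncard) :
    2^(g-1)*(s-(g-1)) ≤ (Set.univ \ (rowSet C b ∪ rowSet D b)).ncard := by
  apply tool4 s (g-1) (by omega) _ _ hmix.1 hmix.2
  · rw [Set.disjoint_left]
    intro a haC haD
    exact Set.disjoint_left.1 hdisj haC haD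
  · intro u hu v hv k he
    exact hnadj _ hu _ hv ((adj_row.2 ⟨k, he⟩).symm)
  · intro a ha
    exact row_deg C (hdegC _ ha)
  · intro a ha
    exact row_deg D (hdegD _ ha)

lemma mixed_col (hg : g ≤ s) (hst : s ≤ t) (C D : Set (LeTQVert s t)) {a : Fin s → Bool}
    (hmix : (colSet C a).Nonempty ∧ (colSet D a).Nonempty)
    (hdisj : Disjoint C D)
    (hnadj : ∀ u ∈ C, ∀ v ∈ D, ¬ (LeTQ s t).Adj u v)
    (hdegC : ∀ v ∈ C, g ≤ (((LeTQ s t).neighborSet v) ∩ C).ncard)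
    (hdegD : ∀ v ∈ D, g ≤ (((LeTQ s t).neighborSet v) ∩ D).ncard) :
    2^(g-1)*(t-(g-1)) ≤ (Set.univ \ (colSet C a ∪ colSet D a)).ncard := by
  apply tool4 t (g-1) (by omega) _ _ hmix.1 hmix.2
  · rw [Set.disjoint_left]
    intro bb hbC hbD
    exact Set.disjoint_left.1 hdisj hbC hbD
  · intro u hu v hv k he
    exact hnadj _ hu _ hv ((adj_col.2 ⟨k, he⟩).symm)
  · intro bb hb
    exact col_deg C (hdegC _ hb)
  · intro bb hb
    exact col_deg D (hdegD _ hb)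

noncomputable def gphi (C D : Set (LeTQVert s t)) (a1 a2 : Fin s → Bool)
    (bb : Fin t → Bool) : LeTQVert s t := by
  classical
  exact if (a1, bb, true) ∉ C ∪ D then (a1, bb, true)
  else if (a2, bb, true) ∉ C ∪ D then (a2, bb, true)
  else if (a1, bb, false) ∉ C ∪ D then (a1, bb, false)
  else (a2, bb, false)

lemma gphi_snd (C D : Set (LeTQVert s t)) (a1 a2 : Fin s → Bool) (bb : Fin t → Bool) :
    (gphi C D a1 a2 bb).2.1 = bb := by
  unfold gphi
  split_ifs <;> rfl

lemma gphi_inj (C D : Set (LeTQVert s t)) (a1 a2 : Fin s → Bool) :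
    Function.Injective (gphi C D a1 a2) := by
  intro x y h
  rw [← gphi_snd C D a1 a2 x, h, gphi_snd]

lemma gphi_mem {C D : Set (LeTQVert s t)} {a1 a2 : Fin s → Bool}
    (hColC : ∀ y, ((a1, y, true) : LeTQVert s t) ∉ C)
    (hColD : ∀ y, ((a2, y, true) : LeTQVert s t) ∉ D)
    (hnadj : ∀ u ∈ C, ∀ v ∈ D, ¬ (LeTQ s t).Adj u v)
    {bb : Fin t → Bool}
    (hpure : ¬((rowSet C bb).Nonempty ∧ (rowSet D bb).Nonempty)) :
    gphi C D a1 a2 bb ∈ Set.univ \ (C ∪ D) := by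
  by_cases h1 : ((a1, bb, true) : LeTQVert s t) ∉ C ∪ D
  · unfold gphi; rw [if_pos h1]; exact ⟨trivial, h1⟩
  · by_cases h2 : ((a2, bb, true) : LeTQVert s t) ∉ C ∪ D
    · unfold gphi; rw [if_neg h1, if_pos h2]; exact ⟨trivial, h2⟩
    · by_cases h3 : ((a1, bb, false) : LeTQVert s t) ∉ C ∪ D
      · unfold gphi; rw [if_neg h1, if_neg h2, if_pos h3]; exact ⟨trivial, h3⟩
      · unfold gphi
        rw [if_neg h1, if_neg h2, if_neg h3]
        rw [not_not] at h1 h2 h3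
        have hx : ((a1, bb, true) : LeTQVert s t) ∈ D := by
          rcases h1 with h | h
          · exact absurd h (hColC bb)
          · exact h
        have hx' : ((a2, bb, true) : LeTQVert s t) ∈ C := by
          rcases h2 with h | h
          · exact h
          · exact absurd h (hColD bb)
        have hy : ((a1, bb, false) : LeTQVert s t) ∈ D := by
          rcases h3 with h | h
          · exact absurd adj_flip01 (hnadj _ h _ hx)
          · exact h
        refine ⟨trivial, ?_⟩
        rintro (h | h)
        · exact hpure ⟨⟨a2, h⟩, ⟨a1, hy⟩⟩
        · exact hnadj _ hx' _ h adj_flip10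

noncomputable def gpsi (C D : Set (LeTQVert s t)) (b1 b2 : Fin t → Bool)
    (a : Fin s → Bool) : LeTQVert s t := by
  classical
  exact if (a, b1, false) ∉ C ∪ D then (a, b1, false)
  else if (a, b2, false) ∉ C ∪ D then (a, b2, false)
  else if (a, b1, true) ∉ C ∪ D then (a, b1, true)
  else (a, b2, true)

lemma gpsi_fst (C D : Set (LeTQVert s t)) (b1 b2 : Fin t → Bool) (a : Fin s → Bool) :
    (gpsi C D b1 b2 a).1 = a := by
  unfold gpsi
  split_ifs <;> rfl

lemma gpsi_inj (C D : Set (LeTQVert s t)) (b1 b2 : Fin t → Bool) :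
    Function.Injective (gpsi C D b1 b2) := by
  intro x y h
  rw [← gpsi_fst C D b1 b2 x, h, gpsi_fst]

lemma gpsi_mem {C D : Set (LeTQVert s t)} {b1 b2 : Fin t → Bool}
    (hRowC : ∀ y, ((y, b1, false) : LeTQVert s t) ∉ C)
    (hRowD : ∀ y, ((y, b2, false) : LeTQVert s t) ∉ D)
    (hnadj : ∀ u ∈ C, ∀ v ∈ D, ¬ (LeTQ s t).Adj u v)
    {a : Fin s → Bool}
    (hpure : ¬((colSet C a).Nonempty ∧ (colSet D a).Nonempty)) :
    gpsi C D b1 b2 a ∈ Set.univ \ (C ∪ D) := by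
  by_cases h1 : ((a, b1, false) : LeTQVert s t) ∉ C ∪ D
  · unfold gpsi; rw [if_pos h1]; exact ⟨trivial, h1⟩
  · by_cases h2 : ((a, b2, false) : LeTQVert s t) ∉ C ∪ D
    · unfold gpsi; rw [if_neg h1, if_pos h2]; exact ⟨trivial, h2⟩
    · by_cases h3 : ((a, b1, true) : LeTQVert s t) ∉ C ∪ D
      · unfold gpsi; rw [if_neg h1, if_neg h2, if_pos h3]; exact ⟨trivial, h3⟩
      · unfold gpsi
        rw [if_neg h1, if_neg h2, if_neg h3]
        rw [not_not] at h1 h2 h3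
        have hx : ((a, b1, false) : LeTQVert s t) ∈ D := by
          rcases h1 with h | h
          · exact absurd h (hRowC a)
          · exact h
        have hx' : ((a, b2, false) : LeTQVert s t) ∈ C := by
          rcases h2 with h | h
          · exact h
          · exact absurd h (hRowD a)
        have hy : ((a, b1, true) : LeTQVert s t) ∈ D := by
          rcases h3 with h | h
          · exact absurd adj_flip10 (hnadj _ h _ hx)
          · exact h
        refine ⟨trivial, ?_⟩
        rintro (h | h)
        · exact hpure ⟨⟨b2, h⟩, ⟨b1, hy⟩⟩
        · exact hnadj _ hx' _ h adj_flip01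

end Scratch10

namespace Scratch11
open Scratch Scratch2 Scratch3 Scratch5 Scratch6 Scratch7 Scratch8 Scratch9 Scratch10

variable {s t g : ℕ}

lemma ncard_two_pieces {α : Type*} [Finite α] {S1 S2 F : Set α}
    (h1 : S1 ⊆ F) (h2 : S2 ⊆ F) (hd : Disjoint S1 S2) :
    S1.ncard + S2.ncard ≤ F.ncard := by
  rw [← Set.ncard_union_eq hd (Set.toFinite _) (Set.toFinite _)]
  exact Set.ncard_le_ncard (Set.union_subset h1 h2) (Set.toFinite _)

lemma rowFree_sub (C D : Set (LeTQVert s t)) (b : Fin t → Bool) :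
    (fun a => ((a, b, false) : LeTQVert s t)) '' (Set.univ \ (rowSet C b ∪ rowSet D b)) ⊆
      Set.univ \ (C ∪ D) := by
  rintro w ⟨a, ⟨-, ha⟩, rfl⟩
  refine ⟨trivial, ?_⟩
  rintro (h | h)
  · exact ha (Or.inl h)
  · exact ha (Or.inr h)

lemma colFree_sub (C D : Set (LeTQVert s t)) (a : Fin s → Bool) :
    (fun bb => ((a, bb, true) : LeTQVert s t)) '' (Set.univ \ (colSet C a ∪ colSet D a)) ⊆
      Set.univ \ (C ∪ D) := by
  rintro w ⟨bb, ⟨-, hb⟩, rfl⟩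
  refine ⟨trivial, ?_⟩
  rintro (h | h)
  · exact hb (Or.inl h)
  · exact hb (Or.inr h)

lemma master (hs : 1 ≤ s) (hst : s ≤ t) (hg : g ≤ s)
    (C D : Set (LeTQVert s t)) (hCne : C.Nonempty) (hDne : D.Nonempty)
    (hdisj : Disjoint C D)
    (hnadj : ∀ u ∈ C, ∀ v ∈ D, ¬ (LeTQ s t).Adj u v)
    (hdegC : ∀ v ∈ C, g ≤ (((LeTQ s t).neighborSet v) ∩ C).ncard)
    (hdegD : ∀ v ∈ D, g ≤ (((LeTQ s t).neighborSet v) ∩ D).ncard) :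
    2 ^ g * (s - g + 1) ≤ (Set.univ \ (C ∪ D)).ncard := by
  classical
  have hnadjD : ∀ u ∈ D, ∀ w, (LeTQ s t).Adj u w → w ∉ C := by
    intro u hu w hadj hw
    exact hnadj _ hw _ hu hadj.symm
  have hnadjC : ∀ u ∈ C, ∀ w, (LeTQ s t).Adj u w → w ∉ D := by
    intro u hu w hadj hw
    exact hnadj _ hu _ hw hadj
  have hUC : Set.univ \ (D ∪ C) = Set.univ \ (C ∪ D) := by rw [Set.union_comm]
  by_cases hD0 : ∀ v ∈ D, v.2.2 = false
  · have := case_L0 hg D C hDne hD0 hnadjD hdegD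
    rwa [hUC] at this
  by_cases hC0 : ∀ v ∈ C, v.2.2 = false
  · exact case_L0 hg C D hCne hC0 hnadjC hdegC
  by_cases hD1 : ∀ v ∈ D, v.2.2 = true
  · have := case_L1 (hg.trans hst) D C hDne hD1 hnadjD hdegD
    rw [hUC] at this
    exact le_trans (la8 hst) this
  by_cases hC1 : ∀ v ∈ C, v.2.2 = true
  · exact le_trans (la8 hst) (case_L1 (hg.trans hst) C D hCne hC1 hnadjC hdegC)
  push_neg at hD0 hC0 hD1 hC1
  obtain ⟨⟨ad1, bd1, cd1⟩, hvD1mem, hvD1⟩ := hD0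
  obtain ⟨⟨ac1, bc1, cc1⟩, hvC1mem, hvC1⟩ := hC0
  obtain ⟨⟨ad0, bd0, cd0⟩, hvD0mem, hvD0⟩ := hD1
  obtain ⟨⟨ac0, bc0, cc0⟩, hvC0mem, hvC0⟩ := hC1
  have hcd1 : cd1 = true := by revert hvD1; cases cd1 <;> simp
  have hcc1 : cc1 = true := by revert hvC1; cases cc1 <;> simp
  have hcd0 : cd0 = false := by revert hvD0; cases cd0 <;> simp
  have hcc0 : cc0 = false := by revert hvC0; cases cc0 <;> simp
  subst hcd1; subst hcc1; subst hcd0; subst hcc0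
  have hDcol : bd1 ∈ colSet D ad1 := hvD1mem
  have hCcol : bc1 ∈ colSet C ac1 := hvC1mem
  have hDrow : ad0 ∈ rowSet D bd0 := hvD0mem
  have hCrow : ac0 ∈ rowSet C bc0 := hvC0mem
  have rowPiece : ∀ b : Fin t → Bool, (rowSet C b).Nonempty ∧ (rowSet D b).Nonempty →
      2^(g-1)*(s-(g-1)) ≤
      ((fun a => ((a, b, false) : LeTQVert s t)) ''
        (Set.univ \ (rowSet C b ∪ rowSet D b))).ncard := by
    intro b hb
    rw [Set.ncard_image_of_injective _ (fun x y h => (Prod.ext_iff.1 h).1)]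
    exact mixed_row hg C D hb hdisj hnadj hdegC hdegD
  have colPiece : ∀ a : Fin s → Bool, (colSet C a).Nonempty ∧ (colSet D a).Nonempty →
      2^(g-1)*(t-(g-1)) ≤
      ((fun bb => ((a, bb, true) : LeTQVert s t)) ''
        (Set.univ \ (colSet C a ∪ colSet D a))).ncard := by
    intro a ha
    rw [Set.ncard_image_of_injective _
      (fun x y h => (Prod.ext_iff.1 (Prod.ext_iff.1 h).2).1)]
    exact mixed_col hg hst C D ha hdisj hnadj hdegC hdegD
  by_cases hmr2 : ∃ b1 b2 : Fin t → Bool, b1 ≠ b2 ∧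
      ((rowSet C b1).Nonempty ∧ (rowSet D b1).Nonempty) ∧
      ((rowSet C b2).Nonempty ∧ (rowSet D b2).Nonempty)
  · obtain ⟨b1, b2, hne, hm1, hm2⟩ := hmr2
    refine le_trans (laA hg hs) (le_trans (Nat.add_le_add (rowPiece b1 hm1) (rowPiece b2 hm2)) ?_)
    refine ncard_two_pieces (rowFree_sub C D b1) (rowFree_sub C D b2) ?_
    rw [Set.disjoint_left]
    rintro w ⟨a, -, rfl⟩ ⟨a', -, he⟩
    exact hne ((Prod.ext_iff.1 (Prod.ext_iff.1 he).2).1).symm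
  by_cases hmc2 : ∃ a1 a2 : Fin s → Bool, a1 ≠ a2 ∧
      ((colSet C a1).Nonempty ∧ (colSet D a1).Nonempty) ∧
      ((colSet C a2).Nonempty ∧ (colSet D a2).Nonempty)
  · obtain ⟨a1, a2, hne, hm1, hm2⟩ := hmc2
    refine le_trans (laB hg hs hst) (le_trans (Nat.add_le_add (colPiece a1 hm1) (colPiece a2 hm2)) ?_)
    refine ncard_two_pieces (colFree_sub C D a1) (colFree_sub C D a2) ?_
    rw [Set.disjoint_left]
    rintro w ⟨bb, -, rfl⟩ ⟨bb', -, he⟩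
    exact hne ((Prod.ext_iff.1 he).1).symm
  by_cases hmr1 : ∃ b : Fin t → Bool, (rowSet C b).Nonempty ∧ (rowSet D b).Nonempty
  · obtain ⟨bstar, hmb⟩ := hmr1
    by_cases hmc1 : ∃ a : Fin s → Bool, (colSet C a).Nonempty ∧ (colSet D a).Nonempty
    · -- one mixed row + one mixed column
      obtain ⟨astar, hma⟩ := hmc1
      refine le_trans (laC hg hs hst)
        (le_trans (Nat.add_le_add (rowPiece bstar hmb) (colPiece astar hma)) ?_)
      refine ncard_two_pieces (rowFree_sub C D bstar) (colFree_sub C D astar) ?_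
      rw [Set.disjoint_left]
      rintro w ⟨a, -, rfl⟩ ⟨bb, -, he⟩
      cases (Prod.ext_iff.1 (Prod.ext_iff.1 he).2).2
    · -- exactly one mixed row, no mixed column
      push_neg at hmc1
      have hColC : ∀ y, ((ad1, y, true) : LeTQVert s t) ∉ C := by
        intro y hy
        exact Set.notMem_empty bd1 ((hmc1 ad1 ⟨y, hy⟩) ▸ hDcol)
      have hColD : ∀ y, ((ac1, y, true) : LeTQVert s t) ∉ D := by
        intro y hy
        exact Set.notMem_empty y ((hmc1 ac1 ⟨bc1, hCcol⟩) ▸ (hy : y ∈ colSet D ac1))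
      have huniq : ∀ b : Fin t → Bool,
          ((rowSet C b).Nonempty ∧ (rowSet D b).Nonempty) → b = bstar := by
        intro b hb
        by_contra hne
        exact hmr2 ⟨b, bstar, hne, hb, hmb⟩
      set S1 := Set.range (fun p : {bb : Fin t → Bool // bb ≠ bstar} =>
        gphi C D ad1 ac1 p.1) with hS1
      have hS1sub : S1 ⊆ Set.univ \ (C ∪ D) := by
        rintro w ⟨⟨bb, hbb⟩, rfl⟩
        exact gphi_mem hColC hColD hnadj (fun hmix => hbb (huniq bb hmix))
      have hS1card : S1.ncard = 2^t - 1 := by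
        rw [hS1, ncard_range _ (fun p q h => Subtype.ext (gphi_inj C D ad1 ac1 h))]
        rw [Fintype.card_subtype_compl, Fintype.card_subtype_eq,
          Fintype.card_fun, Fintype.card_bool, Fintype.card_fin]
      refine le_trans (laD hg hs hst) ?_
      have hsum : (2^t - 1) + 2^(g-1)*(s-(g-1)) ≤ S1.ncard +
          ((fun a => ((a, bstar, false) : LeTQVert s t)) ''
            (Set.univ \ (rowSet C bstar ∪ rowSet D bstar))).ncard :=
        Nat.add_le_add (le_of_eq hS1card.symm) (rowPiece bstar hmb)
      refine le_trans hsum (ncard_two_pieces hS1sub (rowFree_sub C D bstar) ?_)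
      rw [Set.disjoint_left]
      rintro w ⟨⟨bb, hbb⟩, rfl⟩ ⟨a, -, he⟩
      apply hbb
      have he' : ((a, bstar, false) : LeTQVert s t) = gphi C D ad1 ac1 bb := he
      rw [← gphi_snd C D ad1 ac1 bb, ← he']
  · push_neg at hmr1
    by_cases hmc1 : ∃ a : Fin s → Bool, (colSet C a).Nonempty ∧ (colSet D a).Nonempty
    · -- no mixed row, one mixed column
      obtain ⟨astar, hma⟩ := hmc1
      have hRowC : ∀ y, ((y, bd0, false) : LeTQVert s t) ∉ C := by
        intro y hy
        exact Set.notMem_empty ad0 ((hmr1 bd0 ⟨y, hy⟩) ▸ hDrow)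
      have hRowD : ∀ y, ((y, bc0, false) : LeTQVert s t) ∉ D := by
        intro y hy
        exact Set.notMem_empty y ((hmr1 bc0 ⟨ac0, hCrow⟩) ▸ (hy : y ∈ rowSet D bc0))
      have huniq : ∀ a : Fin s → Bool,
          ((colSet C a).Nonempty ∧ (colSet D a).Nonempty) → a = astar := by
        intro a ha
        by_contra hne
        exact hmc2 ⟨a, astar, hne, ha, hma⟩
      set S1 := Set.range (fun p : {a : Fin s → Bool // a ≠ astar} =>
        gpsi C D bd0 bc0 p.1) with hS1
      have hS1sub : S1 ⊆ Set.univ \ (C ∪ D) := by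
        rintro w ⟨⟨a, ha⟩, rfl⟩
        exact gpsi_mem hRowC hRowD hnadj (fun hmix => ha (huniq a hmix))
      have hS1card : S1.ncard = 2^s - 1 := by
        rw [hS1, ncard_range _ (fun p q h => Subtype.ext (gpsi_inj C D bd0 bc0 h))]
        rw [Fintype.card_subtype_compl, Fintype.card_subtype_eq,
          Fintype.card_fun, Fintype.card_bool, Fintype.card_fin]
      refine le_trans (laE hg hs hst) ?_
      have hsum : (2^s - 1) + 2^(g-1)*(t-(g-1)) ≤ S1.ncard +
          ((fun bb => ((astar, bb, true) : LeTQVert s t)) ''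
            (Set.univ \ (colSet C astar ∪ colSet D astar))).ncard :=
        Nat.add_le_add (le_of_eq hS1card.symm) (colPiece astar hma)
      refine le_trans hsum (ncard_two_pieces hS1sub (colFree_sub C D astar) ?_)
      rw [Set.disjoint_left]
      rintro w ⟨⟨a, ha⟩, rfl⟩ ⟨bb, -, he⟩
      apply ha
      have he' : ((astar, bb, true) : LeTQVert s t) = gpsi C D bd0 bc0 a := he
      rw [← gpsi_fst C D bd0 bc0 a, ← he']
    · -- no mixed row, no mixed column
      push_neg at hmc1
      have hColC : ∀ y, ((ad1, y, true) : LeTQVert s t) ∉ C := by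
        intro y hy
        exact Set.notMem_empty bd1 ((hmc1 ad1 ⟨y, hy⟩) ▸ hDcol)
      have hColD : ∀ y, ((ac1, y, true) : LeTQVert s t) ∉ D := by
        intro y hy
        exact Set.notMem_empty y ((hmc1 ac1 ⟨bc1, hCcol⟩) ▸ (hy : y ∈ colSet D ac1))
      refine le_trans (laF hg hst) ?_
      have hrange : (Set.range (gphi C D ad1 ac1)).ncard = 2^t := by
        rw [ncard_range _ (gphi_inj C D ad1 ac1), Fintype.card_fun, Fintype.card_bool,
          Fintype.card_fin]
      calc (2:ℕ)^t = (Set.range (gphi C D ad1 ac1)).ncard := hrange.symm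
        _ ≤ (Set.univ \ (C ∪ D)).ncard :=
          Set.ncard_le_ncard (Set.range_subset_iff.2
            (fun bb => gphi_mem hColC hColD hnadj (fun hmix => by
              obtain ⟨x, hx⟩ := hmix.2
              exact Set.notMem_empty x ((hmr1 bb hmix.1) ▸ hx))))
            (Set.toFinite _)

end Scratch11

/-- The R^g-vertex-connectivity of LeTQ(s,t) is 2^g(s-g+1). -/
theorem stmt11 (s t g : ℕ) (hs : 1 ≤ s) (hst : s ≤ t) (hg : g ≤ s) :
    IsLeast {n : ℕ | ∃ F : Set (LeTQVert s t),
      (∀ v ∉ F, g ≤ ((LeTQ s t).neighborSet v \ F).ncard) ∧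
      ¬ ((LeTQ s t).induce Fᶜ).Preconnected ∧ F.ncard = n}
      (2 ^ g * (s - g + 1)) := by
  constructor
  · exact ⟨Scratch2.FFset s t g, Scratch4.deg_cond hst hg,
      Scratch4.not_preconn hs hst hg, Scratch3.ncard_FF hg⟩
  · rintro n ⟨F, hdeg, hconn, rfl⟩
    classical
    simp only [SimpleGraph.Preconnected] at hconn
    push_neg at hconn
    obtain ⟨z0, w0, hnr⟩ := hconn
    set R := fun v : LeTQVert s t => ∃ hv : v ∈ Fᶜ,
      ((LeTQ s t).induce Fᶜ).Reachable z0 ⟨v, hv⟩ with hR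
    set C := {v : LeTQVert s t | v ∉ F ∧ R v} with hC
    set D := {v : LeTQVert s t | v ∉ F ∧ ¬ R v} with hD
    have hext : ∀ u v : LeTQVert s t, u ∉ F → v ∉ F → (LeTQ s t).Adj u v → R u → R v := by
      rintro u v hu hv hadj ⟨hu', hr⟩
      exact ⟨hv, hr.trans (SimpleGraph.Adj.reachable (by exact hadj))⟩
    have hz0C : (z0 : LeTQVert s t) ∈ C :=
      ⟨z0.2, z0.2, by exact SimpleGraph.Reachable.refl z0⟩
    have hw0D : (w0 : LeTQVert s t) ∈ D := by
      refine ⟨w0.2, ?_⟩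
      rintro ⟨hw, hr⟩
      exact hnr (by exact hr)
    have hdisj : Disjoint C D := by
      rw [Set.disjoint_left]
      rintro v ⟨-, h1⟩ ⟨-, h2⟩
      exact h2 h1
    have hnadj : ∀ u ∈ C, ∀ v ∈ D, ¬ (LeTQ s t).Adj u v := by
      rintro u ⟨hu, hRu⟩ v ⟨hv, hRv⟩ hadj
      exact hRv (hext u v hu hv hadj hRu)
    have hdegC : ∀ v ∈ C, g ≤ (((LeTQ s t).neighborSet v) ∩ C).ncard := by
      rintro v ⟨hv, hRv⟩
      refine le_trans (hdeg v hv) (Set.ncard_le_ncard ?_ (Set.toFinite _))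
      rintro y ⟨hyN, hyF⟩
      exact ⟨hyN, hyF, hext v y hv hyF hyN hRv⟩
    have hdegD : ∀ v ∈ D, g ≤ (((LeTQ s t).neighborSet v) ∩ D).ncard := by
      rintro v ⟨hv, hRv⟩
      refine le_trans (hdeg v hv) (Set.ncard_le_ncard ?_ (Set.toFinite _))
      rintro y ⟨hyN, hyF⟩
      refine ⟨hyN, hyF, ?_⟩
      intro hRy
      exact hRv (hext y v hyF hv ((LeTQ s t).adj_symm hyN) hRy)
    have hFeq : Set.univ \ (C ∪ D) = F := by
      ext v
      constructor
      · rintro ⟨-, hv⟩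
        by_contra hvF
        apply hv
        by_cases hRv : R v
        · exact Or.inl ⟨hvF, hRv⟩
        · exact Or.inr ⟨hvF, hRv⟩
      · intro hvF
        refine ⟨trivial, ?_⟩
        rintro (⟨h, -⟩ | ⟨h, -⟩) <;> exact h hvF
    have hm := Scratch11.master hs hst hg C D ⟨_, hz0C⟩ ⟨_, hw0D⟩ hdisj hnadj hdegC hdegD
    rwa [hFeq] at hm
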